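/- arXiv:math/9901051 — 7 statements merged into one kernel-verified Lean document; each statement's English description precedes it below -/
import Mathlib

section
/- (Theorem III) Let φ, ρ : ℚ_p → ℂ be μ-integrable functions such that φ(x) = 0 and ρ(x) = 0 whenever ‖x‖ > 1, and such that ∫ φ dμ = 0 and ∫ ρ dμ = 0. Then ∫ 𝓕φ(x) · conj(ρ(x)) dμ(x) = 0 (the integrand is integrable and the integral vanishes). In other words, the incoming space D₋ of square-integrable functions supported in the closed unit ball with vanishing integral is orthogonal to its image 𝓕(D₋) under the Fourier transform. -/
open MeasureTheory Complex

/-- Fourier transform on `ℚ_[p]` with respect to the additive character `ψ`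
and the Haar measure `μ`: `𝓕φ(x) = ∫ φ(y)·ψ(−x·y) dμ(y)`. -/
noncomputable def fourierT (p : ℕ) [Fact p.Prime] [MeasurableSpace ℚ_[p]]
    (μ : Measure ℚ_[p]) (ψ : ℚ_[p] → ℂ) (φ : ℚ_[p] → ℂ) : ℚ_[p] → ℂ :=
  fun x => ∫ y, φ y * ψ (-(x * y)) ∂μ

/-- Inverse Fourier transform: `𝓕⁻¹φ(x) = ∫ φ(y)·ψ(x·y) dμ(y)`. -/
noncomputable def fourierInvT (p : ℕ) [Fact p.Prime] [MeasurableSpace ℚ_[p]]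
    (μ : Measure ℚ_[p]) (ψ : ℚ_[p] → ℂ) (φ : ℚ_[p] → ℂ) : ℚ_[p] → ℂ :=
  fun x => ∫ y, φ y * ψ (x * y) ∂μ

/-- A Schwartz–Bruhat function on `ℚ_[p]`: locally constant with compact support. -/
def IsSchwartzBruhat {p : ℕ} [Fact p.Prime] (φ : ℚ_[p] → ℂ) : Prop :=
  IsLocallyConstant φ ∧ HasCompactSupport φ

/-- Theorem III: the incoming space `D₋` (functions supported in the closed unit
ball with vanishing integral) is orthogonal to its Fourier transform `𝓕(D₋)`. -/
theorem incoming_perp_fourier_incoming (p : ℕ) [Fact p.Prime]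
    [MeasurableSpace ℚ_[p]] [BorelSpace ℚ_[p]]
    (μ : Measure ℚ_[p]) [μ.IsAddHaarMeasure]
    (hμ : μ {x : ℚ_[p] | ‖x‖ ≤ 1} = 1)
    (ψ : ℚ_[p] → ℂ) (hψ_cont : Continuous ψ)
    (hψ_add : ∀ x y : ℚ_[p], ψ (x + y) = ψ x * ψ y)
    (hψ_norm : ∀ x : ℚ_[p], ‖ψ x‖ = 1)
    (hψ_triv : ∀ x : ℚ_[p], ‖x‖ ≤ 1 → ψ x = 1)
    (hψ_nontriv : ∃ x₀ : ℚ_[p], ‖x₀‖ = (p : ℝ) ∧ ψ x₀ ≠ 1)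
    (φ ρ : ℚ_[p] → ℂ) (hφ : Integrable φ μ) (hρ : Integrable ρ μ)
    (hφsupp : ∀ x : ℚ_[p], 1 < ‖x‖ → φ x = 0)
    (hρsupp : ∀ x : ℚ_[p], 1 < ‖x‖ → ρ x = 0)
    (hφint : ∫ x, φ x ∂μ = 0) (hρint : ∫ x, ρ x ∂μ = 0) :
    Integrable (fun x => fourierT p μ ψ φ x * (starRingEnd ℂ) (ρ x)) μ ∧
      ∫ x, fourierT p μ ψ φ x * (starRingEnd ℂ) (ρ x) ∂μ = 0 := by
  have hzero : ∀ x : ℚ_[p], fourierT p μ ψ φ x * (starRingEnd ℂ) (ρ x) = 0 := by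
    intro x
    by_cases hx : ‖x‖ ≤ 1
    · have hF : fourierT p μ ψ φ x = 0 := by
        unfold fourierT
        have key : ∀ y : ℚ_[p], φ y * ψ (-(x * y)) = φ y := by
          intro y
          by_cases hy : ‖y‖ ≤ 1
          · rw [hψ_triv (-(x * y)) (by
              rw [norm_neg, norm_mul]
              exact mul_le_one₀ hx (norm_nonneg y) hy), mul_one]
          · rw [hφsupp y (not_le.mp hy), zero_mul]
        simp only [key]
        exact hφint
      rw [hF, zero_mul]
    · rw [hρsupp x (not_le.mp hx), map_zero, mul_zero]
  have heq : (fun x => fourierT p μ ψ φ x * (starRingEnd ℂ) (ρ x)) =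
      (fun _ => (0 : ℂ)) := funext hzero
  rw [heq]
  exact ⟨integrable_zero _ _ _, integral_zero _ _⟩
end

section
/- (Theorem V, trivial-character component: the unit-invariant part of the interacting space is one-dimensional, spanned by Tate's function ω) Let φ : ℚ_p → ℂ be measurable and square-integrable with respect to μ, and invariant under dilation by units: φ(u·x) = φ(x) for every x ∈ ℚ_p and every u with ‖u‖ = 1. Assume that for every Schwartz–Bruhat function g : ℚ_p → ℂ with g(x) = 0 whenever ‖x‖ > 1 and ∫ g dμ = 0, one has both ∫ φ(x)·conj(g(x)) dμ(x) = 0 and ∫ φ(x)·conj(𝓕g(x)) dμ(x) = 0. Then there exists c ∈ ℂ such that φ(x) = c·(indicator of {x : ‖x‖ ≤ 1})(x) for μ-almost every x. -/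
set_option linter.unusedSectionVars false
set_option linter.unusedVariables false
set_option maxHeartbeats 1000000


open MeasureTheory Complex

/-! ### Auxiliary material -/

lemma ilc_indicator {X : Type*} [TopologicalSpace X] {s : Set X} (hs : IsClopen s) :
    IsLocallyConstant (s.indicator (fun _ => (1:ℂ))) := by
  classical
  intro t
  have : (s.indicator (fun _ => (1:ℂ))) ⁻¹' t =
      (if (1:ℂ) ∈ t then s else ∅) ∪ (if (0:ℂ) ∈ t then sᶜ else ∅) := by
    ext x
    by_cases hx : x ∈ s <;> simp [Set.indicator, hx] <;> split_ifs <;> simp_all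
  rw [this]
  split_ifs <;>
    simp [hs.2, hs.1.isOpen_compl, isOpen_empty, IsOpen.union]

variable {p : ℕ} [Fact p.Prime]

/-- the closed ball `{y : ‖y‖ ≤ p^n}` in `ℚ_[p]`. -/
def pball (p : ℕ) [Fact p.Prime] (n : ℤ) : Set ℚ_[p] := {y | ‖y‖ ≤ (p : ℝ) ^ n}

/-- the sphere `{y : ‖y‖ = p^n}` in `ℚ_[p]`. -/
def psphere (p : ℕ) [Fact p.Prime] (n : ℤ) : Set ℚ_[p] := {y | ‖y‖ = (p : ℝ) ^ n}

lemma one_lt_pR : (1:ℝ) < p := by exact_mod_cast (Fact.out : p.Prime).one_lt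

lemma pball_isClopen (n : ℤ) : IsClopen (pball p n) := by
  constructor
  · exact isClosed_le (continuous_norm) continuous_const
  · have : pball p n = {y : ℚ_[p] | ‖y‖ < (p:ℝ) ^ (n+1)} := by
      ext y
      simp only [pball, Set.mem_setOf_eq]
      rw [Padic.norm_le_pow_iff_norm_lt_pow_add_one]
    rw [this]
    exact isOpen_lt continuous_norm continuous_const

lemma pball_isCompact (n : ℤ) : IsCompact (pball p n) := by
  have : pball p n = Metric.closedBall (0:ℚ_[p]) ((p:ℝ)^n) := by
    ext y; simp [pball, Metric.mem_closedBall, dist_zero_right]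
  rw [this]; exact isCompact_closedBall 0 _

lemma pball_measurableSet [MeasurableSpace ℚ_[p]] [BorelSpace ℚ_[p]] (n : ℤ) :
    MeasurableSet (pball p n) := (pball_isClopen n).1.measurableSet

lemma pball_mono {m n : ℤ} (h : m ≤ n) : pball p m ⊆ pball p n := by
  intro y hy
  exact le_trans hy (zpow_le_zpow_right₀ (le_of_lt one_lt_pR) h)

lemma pball_zero : pball p 0 = {x : ℚ_[p] | ‖x‖ ≤ 1} := by simp [pball]

lemma norm_eq_zpow {x : ℚ_[p]} (hx : x ≠ 0) : ‖x‖ = (p:ℝ) ^ (-x.valuation) :=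
  Padic.norm_eq_zpow_neg_valuation hx

lemma psphere_eq_diff (n : ℤ) : psphere p n = pball p n \ pball p (n-1) := by
  ext y
  simp only [psphere, pball, Set.mem_diff, Set.mem_setOf_eq, not_le]
  constructor
  · intro h
    refine ⟨le_of_eq h, ?_⟩
    rw [h]
    exact zpow_lt_zpow_right₀ one_lt_pR (by omega)
  · rintro ⟨h1, h2⟩
    have hy : y ≠ 0 := by
      rintro rfl
      simp at h2
      exact absurd h2 (not_lt.2 (zpow_pos (zero_lt_one.trans one_lt_pR) _).le)
    rw [norm_eq_zpow hy] at h1 h2 ⊢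
    rw [zpow_le_zpow_iff_right₀ one_lt_pR] at h1
    rw [zpow_lt_zpow_iff_right₀ one_lt_pR] at h2
    congr 1
    omega

lemma psphere_isOpen (n : ℤ) : IsOpen (psphere p n) := by
  have : psphere p n = {y : ℚ_[p] | (p:ℝ)^(n-1) < ‖y‖} ∩ {y | ‖y‖ < (p:ℝ)^(n+1)} := by
    ext y
    simp only [psphere, Set.mem_inter_iff, Set.mem_setOf_eq]
    constructor
    · intro h
      rw [h]
      exact ⟨zpow_lt_zpow_right₀ one_lt_pR (by omega), zpow_lt_zpow_right₀ one_lt_pR (by omega)⟩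
    · rintro ⟨h1, h2⟩
      have hy : y ≠ 0 := by
        rintro rfl
        simp at h1
        exact absurd h1 (not_lt.2 (zpow_pos (zero_lt_one.trans one_lt_pR) _).le)
      rw [norm_eq_zpow hy] at h1 h2 ⊢
      rw [zpow_lt_zpow_iff_right₀ one_lt_pR] at h1 h2
      congr 1
      omega
  rw [this]
  exact (isOpen_lt continuous_const continuous_norm).inter
    (isOpen_lt continuous_norm continuous_const)

lemma psphere_nonempty (n : ℤ) : (psphere p n).Nonempty :=
  ⟨(p:ℚ_[p])^(-n), by simp [psphere]⟩

section meas
variable [MeasurableSpace ℚ_[p]] [BorelSpace ℚ_[p]] (μ : Measure ℚ_[p]) [μ.IsAddHaarMeasure]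

lemma pball_measure_lt_top (n : ℤ) : μ (pball p n) < ⊤ :=
  (pball_isCompact n).measure_lt_top

lemma pball_measure_pos (n : ℤ) : 0 < μ (pball p n) :=
  (pball_isClopen n).2.measure_pos μ ⟨(p:ℚ_[p])^(-n), by simp [pball]⟩

lemma pball_toReal_pos (n : ℤ) : 0 < (μ (pball p n)).toReal :=
  ENNReal.toReal_pos (pball_measure_pos μ n).ne' (pball_measure_lt_top μ n).ne

lemma psphere_measure_pos (n : ℤ) : 0 < μ (psphere p n) :=
  (psphere_isOpen n).measure_pos μ (psphere_nonempty n)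

lemma psphere_measure_lt_top (n : ℤ) : μ (psphere p n) < ⊤ := by
  rw [psphere_eq_diff]
  exact lt_of_le_of_lt (measure_mono Set.diff_subset) (pball_measure_lt_top μ n)

lemma psphere_toReal_pos (n : ℤ) : 0 < (μ (psphere p n)).toReal :=
  ENNReal.toReal_pos (psphere_measure_pos μ n).ne' (psphere_measure_lt_top μ n).ne
end meas

/-! ### The character integral -/

section char
variable [MeasurableSpace ℚ_[p]] [BorelSpace ℚ_[p]] (μ : Measure ℚ_[p]) [μ.IsAddHaarMeasure]
  (ψ : ℚ_[p] → ℂ) (hψ_cont : Continuous ψ)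
  (hψ_add : ∀ x y : ℚ_[p], ψ (x + y) = ψ x * ψ y)
  (hψ_norm : ∀ x : ℚ_[p], ‖ψ x‖ = 1)
  (hψ_triv : ∀ x : ℚ_[p], ‖x‖ ≤ 1 → ψ x = 1)
  (hψ_nontriv : ∃ x₀ : ℚ_[p], ‖x₀‖ = (p : ℝ) ∧ ψ x₀ ≠ 1)

include hψ_cont hψ_norm in
lemma psi_integrableOn (x : ℚ_[p]) (n : ℤ) :
    IntegrableOn (fun y => ψ (-(x*y))) (pball p n) μ := by
  apply Measure.integrableOn_of_bounded (pball_measure_lt_top μ n).ne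
  · exact (hψ_cont.comp (continuous_const.mul continuous_id).neg).aestronglyMeasurable
  · filter_upwards with y using le_of_eq (hψ_norm _)

include hψ_cont hψ_add hψ_norm hψ_triv in
lemma char_int_zero (x : ℚ_[p]) (n : ℤ)
    (y₀ : ℚ_[p]) (hy₀ : y₀ ∈ pball p n) (hne : ψ (x * y₀) ≠ 1) :
    ∫ y in pball p n, ψ (-(x*y)) ∂μ = 0 := by
  set f : ℚ_[p] → ℂ := Set.indicator (pball p n) (fun y => ψ (-(x*y))) with hf
  have hmem : ∀ y : ℚ_[p], y + y₀ ∈ pball p n ↔ y ∈ pball p n := by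
    intro y
    constructor
    · intro h
      have : y = (y + y₀) + (-y₀) := by ring
      rw [this]
      refine le_trans (Padic.nonarchimedean _ _) (max_le h ?_)
      simpa [pball] using hy₀
    · intro h
      exact le_trans (Padic.nonarchimedean _ _) (max_le h hy₀)
  have key : ∀ y : ℚ_[p], f (y + y₀) = ψ (-(x*y₀)) * f y := by
    intro y
    by_cases h : y ∈ pball p n
    · rw [hf]
      rw [Set.indicator_of_mem ((hmem y).2 h), Set.indicator_of_mem h]
      rw [← hψ_add]
      congr 1
      ring
    · rw [hf, Set.indicator_of_notMem (fun hc => h ((hmem y).1 hc)),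
        Set.indicator_of_notMem h, mul_zero]
  have hint : ∫ y, f y ∂μ = ∫ y in pball p n, ψ (-(x*y)) ∂μ :=
    integral_indicator (pball_measurableSet n)
  have htrans : ∫ y, f (y + y₀) ∂μ = ∫ y, f y ∂μ :=
    integral_add_right_eq_self f y₀
  have hmain : ψ (-(x*y₀)) * ∫ y, f y ∂μ = ∫ y, f y ∂μ := by
    rw [← integral_const_mul, ← htrans]
    exact integral_congr_ae (Filter.Eventually.of_forall (fun y => (key y).symm))
  have hψne : ψ (-(x*y₀)) ≠ 1 := by
    intro hc
    apply hne
    have h0 : ψ 0 = 1 := hψ_triv 0 (by simp)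
    have := hψ_add (x*y₀) (-(x*y₀))
    rw [add_neg_cancel, h0, hc, mul_one] at this
    exact this.symm
  have hI : ∫ y, f y ∂μ = 0 := by
    by_contra hI
    exact hψne (mul_right_cancel₀ hI (by rw [hmain, one_mul]))
  rw [← hint, hI]

include hψ_cont hψ_add hψ_norm hψ_triv hψ_nontriv in
lemma char_int (x : ℚ_[p]) (n : ℤ) :
    ∫ y in pball p n, ψ (-(x*y)) ∂μ =
      if ‖x‖ ≤ (p:ℝ) ^ (-n) then ((μ (pball p n)).toReal : ℂ) else 0 := by
  split_ifs with h
  · have : ∀ y ∈ pball p n, ψ (-(x*y)) = 1 := by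
      intro y hy
      apply hψ_triv
      rw [norm_neg, norm_mul]
      calc ‖x‖ * ‖y‖ ≤ (p:ℝ)^(-n) * (p:ℝ)^n :=
            mul_le_mul h hy (norm_nonneg y) (le_of_lt (zpow_pos (zero_lt_one.trans one_lt_pR) _))
        _ = 1 := by rw [← zpow_add₀ (by linarith [@one_lt_pR p _] : (p:ℝ) ≠ 0)]; simp
    rw [setIntegral_congr_fun (pball_measurableSet n) this]
    simp [Measure.restrict_apply_univ]
    rfl
  · obtain ⟨x₀, hx₀norm, hx₀ne⟩ := hψ_nontriv
    have hx : x ≠ 0 := by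
      rintro rfl
      exact h (by simpa using (zpow_pos (zero_lt_one.trans one_lt_pR) (-n)).le)
    refine char_int_zero μ ψ hψ_cont hψ_add hψ_norm hψ_triv x n (x₀ / x) ?_ ?_
    · have hval : ‖x‖ = (p:ℝ) ^ (-x.valuation) := Padic.norm_eq_zpow_neg_valuation hx
      have hk : 1 - n ≤ -x.valuation := by
        push_neg at h
        rw [hval] at h
        rw [zpow_lt_zpow_iff_right₀ one_lt_pR] at h
        omega
      show ‖x₀ / x‖ ≤ (p:ℝ)^n
      rw [norm_div, hx₀norm, hval, div_le_iff₀ (zpow_pos (zero_lt_one.trans one_lt_pR) _),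
        ← zpow_add₀ (by linarith [@one_lt_pR p _] : (p:ℝ) ≠ 0)]
      calc (p:ℝ) = (p:ℝ)^(1:ℤ) := (zpow_one _).symm
        _ ≤ _ := zpow_le_zpow_right₀ one_lt_pR.le (by omega)
    · rw [mul_div_cancel₀ _ hx]
      exact hx₀ne
end char

/-! ### The test functions -/

noncomputable def gtest (p : ℕ) [Fact p.Prime] [MeasurableSpace ℚ_[p]]
    (μ : Measure ℚ_[p]) (n : ℕ) : ℚ_[p] → ℂ :=
  fun x => (pball p (-(n:ℤ))).indicator (fun _ => (1:ℂ)) x -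
    ((μ (pball p (-(n:ℤ)))).toReal : ℂ) * (pball p 0).indicator (fun _ => (1:ℂ)) x

section g
variable [MeasurableSpace ℚ_[p]] [BorelSpace ℚ_[p]] (μ : Measure ℚ_[p]) [μ.IsAddHaarMeasure]

lemma gtest_sb (n : ℕ) : IsSchwartzBruhat (gtest p μ n) := by
  constructor
  · exact ((ilc_indicator (pball_isClopen _)).sub
      ((IsLocallyConstant.const _).mul (ilc_indicator (pball_isClopen 0))))
  · apply HasCompactSupport.intro (pball_isCompact 0)
    intro x hx
    have h1 : x ∉ pball p (-(n:ℤ)) := by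
      intro hc
      exact hx (le_trans hc (zpow_le_zpow_right₀ one_lt_pR.le (by omega)))
    simp [gtest, Set.indicator_of_notMem, h1, hx]

lemma gtest_vanish (n : ℕ) : ∀ x : ℚ_[p], 1 < ‖x‖ → gtest p μ n x = 0 := by
  intro x hx
  have h0 : x ∉ pball p 0 := by simp [pball]; linarith
  have h1 : x ∉ pball p (-(n:ℤ)) := fun hc =>
    h0 (le_trans hc (zpow_le_zpow_right₀ one_lt_pR.le (by omega)))
  simp [gtest, Set.indicator_of_notMem, h1, h0]

lemma ind_integrable (n : ℤ) :
    Integrable ((pball p n).indicator (fun _ => (1:ℂ))) μ := by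
  rw [integrable_indicator_iff (pball_measurableSet n)]
  exact integrableOn_const (pball_measure_lt_top μ n).ne

lemma ind_integral (n : ℤ) :
    ∫ x, (pball p n).indicator (fun _ => (1:ℂ)) x ∂μ = ((μ (pball p n)).toReal : ℂ) := by
  rw [integral_indicator_const _ (pball_measurableSet n)]
  simp
  rfl

lemma gtest_integral (hμ0 : μ (pball p 0) = 1) (n : ℕ) : ∫ x, gtest p μ n x ∂μ = 0 := by
  unfold gtest
  rw [integral_sub (ind_integrable μ _) ((ind_integrable μ 0).const_mul _),
    integral_const_mul, ind_integral, ind_integral, hμ0]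
  simp
end g

/-! ### Pairing integrals -/

section ints
variable [MeasurableSpace ℚ_[p]] [BorelSpace ℚ_[p]] (μ : Measure ℚ_[p]) [μ.IsAddHaarMeasure]
  {φ : ℚ_[p] → ℂ} (hφL2 : MemLp φ 2 μ)

include hφL2 in
lemma phi_integrableOn {s : Set ℚ_[p]} (hs : μ s ≠ ⊤) : IntegrableOn φ s μ := by
  haveI : IsFiniteMeasure (μ.restrict s) :=
    ⟨by rw [Measure.restrict_apply_univ]; exact lt_of_le_of_ne le_top hs⟩
  exact (hφL2.restrict s).integrable one_le_two

include hφL2 in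
lemma phi_ind_integral (s : Set ℚ_[p]) (hsm : MeasurableSet s) (c : ℝ) :
    ∫ x, φ x * (starRingEnd ℂ) ((c:ℂ) * s.indicator (fun _ => (1:ℂ)) x) ∂μ
      = (c:ℂ) * ∫ x in s, φ x ∂μ := by
  have hpt : ∀ x, φ x * (starRingEnd ℂ) ((c:ℂ) * s.indicator (fun _ => (1:ℂ)) x)
      = (c:ℂ) * s.indicator φ x := by
    intro x
    by_cases hx : x ∈ s <;>
      simp [Set.indicator_of_mem, Set.indicator_of_notMem, hx, Complex.conj_ofReal, mul_comm]
  rw [integral_congr_ae (Filter.Eventually.of_forall hpt), integral_const_mul,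
    integral_indicator hsm]

include hφL2 in
lemma phi_pair (s t : Set ℚ_[p]) (hsm : MeasurableSet s) (htm : MeasurableSet t)
    (hs : μ s ≠ ⊤) (ht : μ t ≠ ⊤) (c : ℝ) :
    ∫ x, φ x * (starRingEnd ℂ)
        (s.indicator (fun _ => (1:ℂ)) x - (c:ℂ) * t.indicator (fun _ => (1:ℂ)) x) ∂μ
      = (∫ x in s, φ x ∂μ) - (c:ℂ) * ∫ x in t, φ x ∂μ := by
  have hpt : ∀ x, φ x * (starRingEnd ℂ)
      (s.indicator (fun _ => (1:ℂ)) x - (c:ℂ) * t.indicator (fun _ => (1:ℂ)) x)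
      = s.indicator φ x - (c:ℂ) * t.indicator φ x := by
    intro x
    by_cases hx : x ∈ s <;> by_cases hx' : x ∈ t <;>
      simp [Set.indicator_of_mem, Set.indicator_of_notMem, hx, hx', Complex.conj_ofReal,
        mul_comm, mul_sub]
  rw [integral_congr_ae (Filter.Eventually.of_forall hpt), integral_sub, integral_indicator hsm,
    integral_const_mul, integral_indicator htm]
  · rw [integrable_indicator_iff hsm]
    exact phi_integrableOn μ hφL2 hs
  · apply Integrable.const_mul
    rw [integrable_indicator_iff htm]
    exact phi_integrableOn μ hφL2 ht
end ints

/-! ### Fourier transform of the test function -/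

section fg
variable [MeasurableSpace ℚ_[p]] [BorelSpace ℚ_[p]] (μ : Measure ℚ_[p]) [μ.IsAddHaarMeasure]
  (ψ : ℚ_[p] → ℂ) (hψ_cont : Continuous ψ)
  (hψ_add : ∀ x y : ℚ_[p], ψ (x + y) = ψ x * ψ y)
  (hψ_norm : ∀ x : ℚ_[p], ‖ψ x‖ = 1)
  (hψ_triv : ∀ x : ℚ_[p], ‖x‖ ≤ 1 → ψ x = 1)
  (hψ_nontriv : ∃ x₀ : ℚ_[p], ‖x₀‖ = (p : ℝ) ∧ ψ x₀ ≠ 1)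

include hψ_cont hψ_add hψ_norm hψ_triv hψ_nontriv in
lemma fourier_gtest (hμ0 : μ (pball p 0) = 1) (n : ℕ) (x : ℚ_[p]) :
    fourierT p μ ψ (gtest p μ n) x
      = ((μ (pball p (-(n:ℤ)))).toReal : ℂ) *
          (pball p n \ pball p 0).indicator (fun _ => (1:ℂ)) x := by
  set m : ℂ := ((μ (pball p (-(n:ℤ)))).toReal : ℂ) with hm
  have hpt : ∀ y, gtest p μ n y * ψ (-(x*y))
      = (pball p (-(n:ℤ))).indicator (fun y => ψ (-(x*y))) y
        - m * (pball p 0).indicator (fun y => ψ (-(x*y))) y := by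
    intro y
    unfold gtest
    by_cases h1 : y ∈ pball p (-(n:ℤ)) <;> by_cases h2 : y ∈ pball p 0 <;>
      simp [Set.indicator_of_mem, Set.indicator_of_notMem, h1, h2, sub_mul, mul_assoc, hm]
  have hint1 : Integrable ((pball p (-(n:ℤ))).indicator (fun y => ψ (-(x*y)))) μ := by
    rw [integrable_indicator_iff (pball_measurableSet _)]
    exact psi_integrableOn μ ψ hψ_cont hψ_norm x _
  have hint2 : Integrable ((pball p 0).indicator (fun y => ψ (-(x*y)))) μ := by
    rw [integrable_indicator_iff (pball_measurableSet _)]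
    exact psi_integrableOn μ ψ hψ_cont hψ_norm x _
  have : fourierT p μ ψ (gtest p μ n) x
      = (∫ y in pball p (-(n:ℤ)), ψ (-(x*y)) ∂μ) - m * ∫ y in pball p 0, ψ (-(x*y)) ∂μ := by
    show (∫ y, gtest p μ n y * ψ (-(x*y)) ∂μ) = _
    rw [integral_congr_ae (Filter.Eventually.of_forall hpt),
      integral_sub hint1 (hint2.const_mul m), integral_indicator (pball_measurableSet _),
      integral_const_mul, integral_indicator (pball_measurableSet _)]
  rw [this, char_int μ ψ hψ_cont hψ_add hψ_norm hψ_triv hψ_nontriv x (-(n:ℤ)),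
    char_int μ ψ hψ_cont hψ_add hψ_norm hψ_triv hψ_nontriv x 0, hμ0]
  simp only [neg_neg, neg_zero, zpow_zero, ENNReal.toReal_one, Complex.ofReal_one]
  have hmem0 : ∀ z : ℚ_[p], z ∈ pball p 0 ↔ ‖z‖ ≤ 1 := fun z => by simp [pball]
  have hone : (1:ℝ) ≤ (p:ℝ)^(n:ℤ) := by
    simpa using zpow_le_zpow_right₀ one_lt_pR.le (by omega : (0:ℤ) ≤ (n:ℤ))
  by_cases h1 : ‖x‖ ≤ (p:ℝ)^(n:ℤ) <;> by_cases h2 : ‖x‖ ≤ (1:ℝ)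
  · rw [if_pos h1, if_pos h2, Set.indicator_of_notMem (fun hc => hc.2 ((hmem0 x).2 h2))]
    ring
  · have hd : x ∈ pball p (n:ℤ) \ pball p 0 := ⟨h1, fun hc => h2 ((hmem0 x).1 hc)⟩
    rw [if_pos h1, if_neg h2, Set.indicator_of_mem hd]
    ring
  · exact absurd (le_trans h2 hone) h1
  · rw [if_neg h1, if_neg h2, Set.indicator_of_notMem (fun hc => h1 hc.1)]
    ring
end fg
/-- Theorem V, trivial-character component: a unit-invariant square-integrable
function orthogonal to `D₋` and to `𝓕(D₋)` is a.e. a multiple of Tate's function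
`ω = 1_{ℤ_p}`. -/
theorem interacting_trivial_component (p : ℕ) [Fact p.Prime]
    [MeasurableSpace ℚ_[p]] [BorelSpace ℚ_[p]]
    (μ : Measure ℚ_[p]) [μ.IsAddHaarMeasure]
    (hμ : μ {x : ℚ_[p] | ‖x‖ ≤ 1} = 1)
    (ψ : ℚ_[p] → ℂ) (hψ_cont : Continuous ψ)
    (hψ_add : ∀ x y : ℚ_[p], ψ (x + y) = ψ x * ψ y)
    (hψ_norm : ∀ x : ℚ_[p], ‖ψ x‖ = 1)
    (hψ_triv : ∀ x : ℚ_[p], ‖x‖ ≤ 1 → ψ x = 1)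
    (hψ_nontriv : ∃ x₀ : ℚ_[p], ‖x₀‖ = (p : ℝ) ∧ ψ x₀ ≠ 1)
    (φ : ℚ_[p] → ℂ) (hφmeas : Measurable φ) (hφL2 : MemLp φ 2 μ)
    (hφinv : ∀ (u x : ℚ_[p]), ‖u‖ = 1 → φ (u * x) = φ x)
    (hperp : ∀ g : ℚ_[p] → ℂ, IsSchwartzBruhat g →
      (∀ x : ℚ_[p], 1 < ‖x‖ → g x = 0) → (∫ x, g x ∂μ = 0) →
      (∫ x, φ x * (starRingEnd ℂ) (g x) ∂μ = 0) ∧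
      (∫ x, φ x * (starRingEnd ℂ) (fourierT p μ ψ g x) ∂μ = 0)) :
    ∃ c : ℂ, ∀ᵐ x ∂μ,
      φ x = c * Set.indicator {y : ℚ_[p] | ‖y‖ ≤ 1} (fun _ => (1 : ℂ)) x := by
  have hμ0 : μ (pball p 0) = 1 := by rw [pball_zero]; exact hμ
  set I : ℂ := ∫ x in pball p 0, φ x ∂μ with hI
  -- consequences of orthogonality
  have hperp' : ∀ n : ℕ,
      (∫ x in pball p (-(n:ℤ)), φ x ∂μ) = ((μ (pball p (-(n:ℤ)))).toReal : ℂ) * I ∧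
      (∫ x in pball p (n:ℤ) \ pball p 0, φ x ∂μ) = 0 := by
    intro n
    obtain ⟨h1, h2⟩ := hperp (gtest p μ n) (gtest_sb μ n) (gtest_vanish μ n)
      (gtest_integral μ hμ0 n)
    constructor
    · have key1 : (∫ x in pball p (-(n:ℤ)), φ x ∂μ)
          - ((μ (pball p (-(n:ℤ)))).toReal : ℂ) * I = 0 := by
        rw [← phi_pair μ hφL2 (pball p (-(n:ℤ))) (pball p 0) (pball_measurableSet _)
          (pball_measurableSet _) (pball_measure_lt_top μ _).ne (pball_measure_lt_top μ _).ne
          ((μ (pball p (-(n:ℤ)))).toReal)]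
        exact h1
      linear_combination key1
    · have h2' : ∫ x, φ x * (starRingEnd ℂ)
          (((μ (pball p (-(n:ℤ)))).toReal : ℂ) *
            (pball p (n:ℤ) \ pball p 0).indicator (fun _ => (1:ℂ)) x) ∂μ = 0 := by
        rw [← h2]
        apply integral_congr_ae
        filter_upwards with x
        rw [fourier_gtest μ ψ hψ_cont hψ_add hψ_norm hψ_triv hψ_nontriv hμ0 n x]
      rw [phi_ind_integral μ hφL2 _ ((pball_measurableSet _).diff (pball_measurableSet _))] at h2'
      have hmne : (((μ (pball p (-(n:ℤ)))).toReal : ℂ)) ≠ 0 := by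
        exact_mod_cast (pball_toReal_pos μ (-(n:ℤ))).ne'
      exact (mul_eq_zero.1 h2').resolve_left hmne
  have hJpos : ∀ k : ℤ, 0 ≤ k → (∫ x in pball p k, φ x ∂μ) = I := by
    intro k hk
    obtain ⟨n, rfl⟩ : ∃ n : ℕ, k = (n:ℤ) := ⟨k.toNat, (Int.toNat_of_nonneg hk).symm⟩
    have h2 := (hperp' n).2
    rw [integral_diff (pball_measurableSet 0)
      (phi_integrableOn μ hφL2 (pball_measure_lt_top μ _).ne) (pball_mono (by omega))] at h2
    exact sub_eq_zero.1 h2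
  have hJneg : ∀ k : ℤ, k ≤ 0 →
      (∫ x in pball p k, φ x ∂μ) = ((μ (pball p k)).toReal : ℂ) * I := by
    intro k hk
    obtain ⟨n, rfl⟩ : ∃ n : ℕ, k = -(n:ℤ) := ⟨(-k).toNat, by omega⟩
    exact (hperp' n).1
  -- φ is radial
  have hrad : ∀ y z : ℚ_[p], z ≠ 0 → ‖y‖ = ‖z‖ → φ y = φ z := by
    intro y z hz h
    have := hφinv (y/z) z (by rw [norm_div, h, div_self (norm_ne_zero_iff.2 hz)])
    rwa [div_mul_cancel₀ _ hz] at this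
  -- the sphere integrals
  have hsph : ∀ k : ℤ, ∀ z ∈ psphere p k, (∫ x in psphere p k, φ x ∂μ)
      = ((μ (psphere p k)).toReal : ℂ) * φ z := by
    intro k z hz
    have hz0 : z ≠ 0 := by
      rintro rfl
      have : (0:ℝ) = (p:ℝ)^k := by simpa [psphere] using hz
      exact absurd this.symm (zpow_pos (zero_lt_one.trans (one_lt_pR (p := p))) k).ne'
    have hc : ∀ y ∈ psphere p k, φ y = φ z := by
      intro y hy
      exact hrad y z hz0 (by rw [show ‖y‖ = (p:ℝ)^k from hy, show ‖z‖ = (p:ℝ)^k from hz])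
    rw [setIntegral_congr_fun (psphere_isOpen k).measurableSet hc, setIntegral_const]
    rw [Complex.real_smul]
    rfl
  have hsd : ∀ k : ℤ, (∫ x in psphere p k, φ x ∂μ)
      = (∫ x in pball p k, φ x ∂μ) - ∫ x in pball p (k-1), φ x ∂μ := by
    intro k
    rw [psphere_eq_diff, integral_diff (pball_measurableSet _)
      (phi_integrableOn μ hφL2 (pball_measure_lt_top μ _).ne) (pball_mono (by omega : k - 1 ≤ k))]
  have hst : ∀ k : ℤ, (μ (psphere p k)).toReal
      = (μ (pball p k)).toReal - (μ (pball p (k-1))).toReal := by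
    intro k
    rw [psphere_eq_diff, measure_diff (pball_mono (by omega))
      (pball_measurableSet _).nullMeasurableSet (pball_measure_lt_top μ _).ne,
      ENNReal.toReal_sub_of_le (measure_mono (pball_mono (by omega)))
        (pball_measure_lt_top μ _).ne]
  -- pointwise identification away from zero
  have hclaim : ∀ x : ℚ_[p], x ≠ 0 →
      φ x = I * Set.indicator {y : ℚ_[p] | ‖y‖ ≤ 1} (fun _ => (1:ℂ)) x := by
    intro x hx
    set k : ℤ := -x.valuation with hk
    have hxs : x ∈ psphere p k := norm_eq_zpow hx
    have e1 := hsph k x hxs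
    have e2 := hsd k
    have hSne : ((μ (psphere p k)).toReal : ℂ) ≠ 0 := by
      exact_mod_cast (psphere_toReal_pos μ k).ne'
    by_cases hk0 : k ≤ 0
    · have hin : x ∈ {y : ℚ_[p] | ‖y‖ ≤ 1} := by
        show ‖x‖ ≤ 1
        calc ‖x‖ = (p:ℝ)^k := hxs
          _ ≤ (p:ℝ)^(0:ℤ) := zpow_le_zpow_right₀ one_lt_pR.le hk0
          _ = 1 := zpow_zero _
      have e3 : ((μ (psphere p k)).toReal : ℂ) * φ x
          = ((μ (psphere p k)).toReal : ℂ) * I := by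
        rw [← e1, e2, hJneg k hk0, hJneg (k-1) (by omega), ← sub_mul]
        congr 1
        rw [← Complex.ofReal_sub, ← hst k]
      rw [Set.indicator_of_mem hin, mul_one]
      exact mul_left_cancel₀ hSne e3
    · have hout : x ∉ {y : ℚ_[p] | ‖y‖ ≤ 1} := by
        show ¬ ‖x‖ ≤ 1
        push_neg
        calc (1:ℝ) = (p:ℝ)^(0:ℤ) := (zpow_zero _).symm
          _ < (p:ℝ)^k := zpow_lt_zpow_right₀ one_lt_pR (by omega)
          _ = ‖x‖ := hxs.symm
      have e3 : ((μ (psphere p k)).toReal : ℂ) * φ x = 0 := by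
        rw [← e1, e2, hJpos k (by omega), hJpos (k-1) (by omega), sub_self]
      rw [Set.indicator_of_notMem hout, mul_zero]
      exact (mul_eq_zero.1 e3).resolve_left hSne
  refine ⟨I, ?_⟩
  have h0 : ∀ᵐ x ∂μ, x ≠ 0 := by
    refine (MeasureTheory.ae_iff).2 ?_
    simp only [ne_eq, not_not]
    have : {x : ℚ_[p] | x = 0} = {(0:ℚ_[p])} := by ext; simp
    rw [this]
    exact measure_singleton 0
  filter_upwards [h0] with x hx using hclaim x hx
end

section
/- (Step in the proof of Theorem XI: P_n and P̃_n commute on the unit-invariant subspace) Let n ≥ 0 be an integer and let φ : ℚ_p → ℂ be a Schwartz–Bruhat function invariant under dilation by units (φ(u·x) = φ(x) whenever ‖u‖ = 1). Then pointwise on ℚ_p: 𝓕(1_{B_n} · 𝓕⁻¹(1_{B_n} · φ)) = 1_{B_n} · 𝓕(1_{B_n} · (𝓕⁻¹φ)); that is, P̃_n P_n φ = P_n P̃_n φ. -/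
open MeasureTheory Complex

/-- The indicator function of the ball `B_j = {x : ‖x‖ ≤ p^j}`. -/
noncomputable def ballInd (p : ℕ) [Fact p.Prime] (j : ℤ) : ℚ_[p] → ℂ :=
  Set.indicator {x : ℚ_[p] | ‖x‖ ≤ (p : ℝ) ^ j} (fun _ => (1 : ℂ))

/-- The operator `Q_n = P̃_n P_n` where `P_n` is multiplication by `1_{B_n}`
and `P̃_n = 𝓕 P_n 𝓕⁻¹`: `Q_nφ = 𝓕(1_{B_n} · 𝓕⁻¹(1_{B_n} · φ))`. -/
noncomputable def Qop (p : ℕ) [Fact p.Prime] [MeasurableSpace ℚ_[p]]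
    (μ : Measure ℚ_[p]) (ψ : ℚ_[p] → ℂ) (n : ℕ) (φ : ℚ_[p] → ℂ) : ℚ_[p] → ℂ :=
  fourierT p μ ψ (fun x => ballInd p n x *
    fourierInvT p μ ψ (fun y => ballInd p n y * φ y) x)

section Aux
variable {p : ℕ} [Fact p.Prime]

lemma ball_isClopen (j : ℤ) : IsClopen {x : ℚ_[p] | ‖x‖ ≤ (p:ℝ)^j} := by
  constructor
  · exact isClosed_le continuous_norm continuous_const
  · have : {x : ℚ_[p] | ‖x‖ ≤ (p:ℝ)^j} = {x : ℚ_[p] | ‖x‖ < (p:ℝ)^(j+1)} := by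
      ext x; exact Padic.norm_le_pow_iff_norm_lt_pow_add_one x j
    rw [this]; exact isOpen_lt continuous_norm continuous_const

lemma ball_isCompact (j : ℤ) : IsCompact {x : ℚ_[p] | ‖x‖ ≤ (p:ℝ)^j} := by
  have : {x : ℚ_[p] | ‖x‖ ≤ (p:ℝ)^j} = Metric.closedBall 0 ((p:ℝ)^j) := by
    ext x; simp [Metric.mem_closedBall, dist_eq_norm]
  rw [this]; exact isCompact_closedBall 0 _

lemma ballInd_continuous (j : ℤ) : Continuous (ballInd p j) := by
  have : ballInd p j = ⇑(LocallyConstant.charFn ℂ (ball_isClopen (p := p) j)) := by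
    rw [LocallyConstant.coe_charFn]; rfl
  rw [this]; exact LocallyConstant.continuous _

lemma one_lt_p : (1:ℝ) < (p:ℝ) := by
  exact_mod_cast (Fact.out : p.Prime).one_lt

lemma mem_ball_add {j : ℤ} {y y₀ : ℚ_[p]} (h₀ : ‖y₀‖ ≤ (p:ℝ)^j) :
    y + y₀ ∈ {x : ℚ_[p] | ‖x‖ ≤ (p:ℝ)^j} ↔ y ∈ {x : ℚ_[p] | ‖x‖ ≤ (p:ℝ)^j} := by
  constructor
  · intro h
    have : ‖y‖ = ‖(y + y₀) + (-y₀)‖ := by ring_nf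
    rw [Set.mem_setOf_eq, this]
    exact le_trans (Padic.nonarchimedean _ _) (max_le h (by simpa using h₀))
  · intro h
    exact le_trans (Padic.nonarchimedean _ _) (max_le h h₀)

lemma char_ball_integral [MeasurableSpace ℚ_[p]] [BorelSpace ℚ_[p]]
    (μ : Measure ℚ_[p]) [μ.IsAddHaarMeasure]
    (ψ : ℚ_[p] → ℂ)
    (hψ_add : ∀ x y : ℚ_[p], ψ (x + y) = ψ x * ψ y)
    (hψ_triv : ∀ x : ℚ_[p], ‖x‖ ≤ 1 → ψ x = 1)
    (hψ_nontriv : ∃ x₀ : ℚ_[p], ‖x₀‖ = (p : ℝ) ∧ ψ x₀ ≠ 1)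
    (n : ℕ) (w : ℚ_[p]) :
    ∫ y, ballInd p n y * ψ (y * w) ∂μ =
      if ‖w‖ ≤ (p:ℝ)^(-(n:ℤ)) then ((μ {x : ℚ_[p] | ‖x‖ ≤ (p:ℝ)^(n:ℤ)}).toReal : ℂ) else 0 := by
  set S := {x : ℚ_[p] | ‖x‖ ≤ (p:ℝ)^(n:ℤ)} with hS
  have hSm : MeasurableSet S := (ball_isClopen (n:ℤ)).1.measurableSet
  have h1 : ∀ (f : ℚ_[p] → ℂ) (y : ℚ_[p]), ballInd p n y * f y = S.indicator f y := by
    intro f y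
    by_cases hy : y ∈ S <;> simp [ballInd, Set.indicator, hy, hS]
  rw [show (fun y => ballInd p n y * ψ (y * w)) = S.indicator (fun y => ψ (y * w)) from
    funext (h1 _), integral_indicator hSm]
  have hp0 : (0:ℝ) < (p:ℝ) := by exact_mod_cast (Fact.out : p.Prime).pos
  by_cases hw : ‖w‖ ≤ (p:ℝ)^(-(n:ℤ))
  · rw [if_pos hw]
    have : ∀ y ∈ S, ψ (y * w) = 1 := by
      intro y hy
      apply hψ_triv
      rw [norm_mul]
      calc ‖y‖ * ‖w‖ ≤ (p:ℝ)^(n:ℤ) * (p:ℝ)^(-(n:ℤ)) := by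
            exact mul_le_mul hy hw (norm_nonneg _) (le_of_lt (zpow_pos hp0 _))
        _ = 1 := by rw [← zpow_add₀ hp0.ne']; simp
    rw [setIntegral_congr_fun hSm this]
    simp [setIntegral_const]
    rfl
  · rw [if_neg hw]
    obtain ⟨x₀, hx₀n, hx₀⟩ := hψ_nontriv
    have hwpos : (0:ℝ) < ‖w‖ := lt_of_lt_of_le (zpow_pos hp0 _) (not_le.mp hw).le
    have hw0 : w ≠ 0 := by simpa using hwpos.ne'
    -- ‖w‖ ≥ p^(1-n)
    have hwg : (p:ℝ)^(1-(n:ℤ)) ≤ ‖w‖ := by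
      rw [Padic.norm_eq_zpow_neg_valuation hw0] at *
      have := (zpow_lt_zpow_iff_right₀ (one_lt_p (p := p))).mp (not_le.mp hw)
      exact zpow_le_zpow_right₀ (one_lt_p (p := p)).le (by omega)
    set y₀ : ℚ_[p] := x₀ / w with hy₀
    have hy₀w : y₀ * w = x₀ := div_mul_cancel₀ _ hw0
    have hy₀n : ‖y₀‖ ≤ (p:ℝ)^(n:ℤ) := by
      rw [hy₀, norm_div, hx₀n, div_le_iff₀ hwpos]
      calc (p:ℝ) = (p:ℝ)^(n:ℤ) * (p:ℝ)^(1-(n:ℤ)) := by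
            rw [← zpow_add₀ (ne_of_gt hp0), show (n:ℤ) + (1-(n:ℤ)) = 1 by ring, zpow_one]
        _ ≤ (p:ℝ)^(n:ℤ) * ‖w‖ := by
            exact mul_le_mul_of_nonneg_left hwg (le_of_lt (zpow_pos hp0 _))
    have key : ∫ y in S, ψ (y * w) ∂μ = ψ x₀ * ∫ y in S, ψ (y * w) ∂μ := by
      conv_lhs => rw [← integral_indicator hSm,
        ← integral_add_right_eq_self (fun y => S.indicator (fun y => ψ (y * w)) y) y₀]
      have : ∀ y : ℚ_[p], S.indicator (fun y => ψ (y * w)) (y + y₀)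
          = S.indicator (fun y => ψ x₀ * ψ (y * w)) y := by
        intro y
        by_cases hy : y ∈ S
        · rw [Set.indicator_of_mem ((mem_ball_add hy₀n).mpr hy),
            Set.indicator_of_mem hy]
          rw [add_mul, hψ_add, hy₀w, mul_comm]
        · rw [Set.indicator_of_notMem (fun h => hy ((mem_ball_add hy₀n).mp h)),
            Set.indicator_of_notMem hy]
      simp_rw [this]
      rw [integral_indicator hSm, integral_const_mul]
    have h2 : (1 - ψ x₀) * (∫ y in S, ψ (y * w) ∂μ) = 0 := by linear_combination key
    exact (mul_eq_zero.mp h2).resolve_left (sub_ne_zero.mpr (Ne.symm hx₀))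

lemma main_swap [MeasurableSpace ℚ_[p]] [BorelSpace ℚ_[p]]
    (μ : Measure ℚ_[p]) [μ.IsAddHaarMeasure]
    (ψ : ℚ_[p] → ℂ) (hψ_cont : Continuous ψ)
    (hψ_add : ∀ x y : ℚ_[p], ψ (x + y) = ψ x * ψ y)
    (hψ_triv : ∀ x : ℚ_[p], ‖x‖ ≤ 1 → ψ x = 1)
    (hψ_nontriv : ∃ x₀ : ℚ_[p], ‖x₀‖ = (p : ℝ) ∧ ψ x₀ ≠ 1)
    (n : ℕ) (g : ℚ_[p] → ℂ) (hgc : Continuous g) (hgs : HasCompactSupport g) (x : ℚ_[p]) :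
    ∫ y, (ballInd p n y * ∫ z, g z * ψ (y * z) ∂μ) * ψ (-(x * y)) ∂μ
      = ∫ z, g z * (if ‖z - x‖ ≤ (p:ℝ)^(-(n:ℤ)) then
          ((μ {x : ℚ_[p] | ‖x‖ ≤ (p:ℝ)^(n:ℤ)}).toReal : ℂ) else 0) ∂μ := by
  have step1 : ∀ y : ℚ_[p],
      (ballInd p n y * ∫ z, g z * ψ (y * z) ∂μ) * ψ (-(x * y))
        = ∫ z, ballInd p n y * (g z * ψ (y * (z - x))) ∂μ := by
    intro y
    rw [mul_comm (ballInd p n y) _, mul_assoc, ← integral_mul_const]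
    congr 1; funext z
    have : ψ (y * (z - x)) = ψ (y * z) * ψ (-(x * y)) := by
      rw [← hψ_add]; ring_nf
    rw [this]; ring
  simp_rw [step1]
  rw [integral_integral_swap_of_hasCompactSupport]
  · congr 1; funext z
    have : ∀ y : ℚ_[p], ballInd p n y * (g z * ψ (y * (z - x)))
        = g z * (ballInd p n y * ψ (y * (z - x))) := fun y => by ring
    simp_rw [this, integral_const_mul,
      char_ball_integral μ ψ hψ_add hψ_triv hψ_nontriv n (z - x)]
  · -- continuity of uncurried
    apply Continuous.mul
    · exact (ballInd_continuous (p := p) n).comp continuous_fst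
    · apply Continuous.mul (hgc.comp continuous_snd)
      exact hψ_cont.comp ((continuous_fst).mul ((continuous_snd).sub continuous_const))
  · -- compact support
    apply HasCompactSupport.intro
      ((ball_isCompact (p := p) (n:ℤ)).prod hgs)
    rintro ⟨y, z⟩ hyz
    simp only [Set.mem_prod, not_and_or] at hyz
    rcases hyz with h | h
    · have : ballInd p n y = 0 := Set.indicator_of_notMem h _
      simp [Function.uncurry, this]
    · have : g z = 0 := image_eq_zero_of_notMem_tsupport h
      simp [Function.uncurry, this]

theorem final (p : ℕ) [Fact p.Prime]
    [MeasurableSpace ℚ_[p]] [BorelSpace ℚ_[p]]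
    (μ : Measure ℚ_[p]) [μ.IsAddHaarMeasure]
    (hμ : μ {x : ℚ_[p] | ‖x‖ ≤ 1} = 1)
    (ψ : ℚ_[p] → ℂ) (hψ_cont : Continuous ψ)
    (hψ_add : ∀ x y : ℚ_[p], ψ (x + y) = ψ x * ψ y)
    (hψ_norm : ∀ x : ℚ_[p], ‖ψ x‖ = 1)
    (hψ_triv : ∀ x : ℚ_[p], ‖x‖ ≤ 1 → ψ x = 1)
    (hψ_nontriv : ∃ x₀ : ℚ_[p], ‖x₀‖ = (p : ℝ) ∧ ψ x₀ ≠ 1)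
    (n : ℕ) (φ : ℚ_[p] → ℂ) (hφc : IsLocallyConstant φ) (hφs : HasCompactSupport φ) :
    ∀ x : ℚ_[p],
      (∫ y, (ballInd p n y * ∫ z, (ballInd p n z * φ z) * ψ (y * z) ∂μ) * ψ (-(x * y)) ∂μ)
        = ballInd p n x *
          ∫ y, (ballInd p n y * ∫ z, φ z * ψ (y * z) ∂μ) * ψ (-(x * y)) ∂μ := by
  intro x
  have hφcont : Continuous φ := hφc.continuous
  have hp1 : (1:ℝ) < (p:ℝ) := one_lt_p
  have hle : (p:ℝ)^(-(n:ℤ)) ≤ (p:ℝ)^(n:ℤ) :=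
    zpow_le_zpow_right₀ hp1.le (by omega)
  rw [main_swap μ ψ hψ_cont hψ_add hψ_triv hψ_nontriv n
      (fun z => ballInd p n z * φ z)
      ((ballInd_continuous n).mul hφcont) (hφs.mul_left) x,
    main_swap μ ψ hψ_cont hψ_add hψ_triv hψ_nontriv n φ hφcont hφs x]
  by_cases hx : ‖x‖ ≤ (p:ℝ)^(n:ℤ)
  · rw [show ballInd p n x = 1 from Set.indicator_of_mem (show x ∈ {x : ℚ_[p] | ‖x‖ ≤ (p:ℝ)^(n:ℤ)} from hx) _, one_mul]
    congr 1; funext z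
    by_cases hz : ‖z - x‖ ≤ (p:ℝ)^(-(n:ℤ))
    · have hzS : ‖z‖ ≤ (p:ℝ)^(n:ℤ) := by
        have : ‖z‖ = ‖(z - x) + x‖ := by ring_nf
        rw [this]
        exact le_trans (Padic.nonarchimedean _ _) (max_le (le_trans hz hle) hx)
      rw [show ballInd p n z = 1 from Set.indicator_of_mem (show z ∈ {x : ℚ_[p] | ‖x‖ ≤ (p:ℝ)^(n:ℤ)} from hzS) _, one_mul]
    · rw [if_neg hz, mul_zero, mul_zero]
  · rw [show ballInd p n x = 0 from Set.indicator_of_notMem (show x ∉ {x : ℚ_[p] | ‖x‖ ≤ (p:ℝ)^(n:ℤ)} from hx) _, zero_mul]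
    rw [show (fun z => (ballInd p n z * φ z) *
        (if ‖z - x‖ ≤ (p:ℝ)^(-(n:ℤ)) then
          ((μ {x : ℚ_[p] | ‖x‖ ≤ (p:ℝ)^(n:ℤ)}).toReal : ℂ) else 0)) = fun _ => (0:ℂ) from ?_,
      integral_zero]
    funext z
    by_cases hz : ‖z‖ ≤ (p:ℝ)^(n:ℤ)
    · have hzx : ¬ ‖z - x‖ ≤ (p:ℝ)^(-(n:ℤ)) := by
        push_neg at hx ⊢
        have h1 : ‖x‖ ≤ max ‖x - z‖ ‖z‖ := by
          calc ‖x‖ = ‖(x - z) + z‖ := by ring_nf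
            _ ≤ max ‖x - z‖ ‖z‖ := Padic.nonarchimedean _ _
        have h2 : ‖x‖ ≤ ‖x - z‖ := by
          rcases max_cases ‖x - z‖ ‖z‖ with ⟨he, _⟩ | ⟨he, _⟩
          · rwa [he] at h1
          · exact absurd ((h1.trans_eq he).trans hz) (not_le.mpr hx)
        rw [norm_sub_rev]
        exact lt_of_le_of_lt hle (lt_of_lt_of_le hx h2)
      rw [if_neg hzx, mul_zero]
    · rw [show ballInd p n z = 0 from Set.indicator_of_notMem (show z ∉ {x : ℚ_[p] | ‖x‖ ≤ (p:ℝ)^(n:ℤ)} from hz) _, zero_mul, zero_mul]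

end Aux

/-- Step in the proof of Theorem XI: `P_n` and `P̃_n` commute on unit-invariant
Schwartz–Bruhat functions. -/

theorem Pn_commutes_unit_invariant (p : ℕ) [Fact p.Prime]
    [MeasurableSpace ℚ_[p]] [BorelSpace ℚ_[p]]
    (μ : Measure ℚ_[p]) [μ.IsAddHaarMeasure]
    (hμ : μ {x : ℚ_[p] | ‖x‖ ≤ 1} = 1)
    (ψ : ℚ_[p] → ℂ) (hψ_cont : Continuous ψ)
    (hψ_add : ∀ x y : ℚ_[p], ψ (x + y) = ψ x * ψ y)
    (hψ_norm : ∀ x : ℚ_[p], ‖ψ x‖ = 1)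
    (hψ_triv : ∀ x : ℚ_[p], ‖x‖ ≤ 1 → ψ x = 1)
    (hψ_nontriv : ∃ x₀ : ℚ_[p], ‖x₀‖ = (p : ℝ) ∧ ψ x₀ ≠ 1)
    (n : ℕ) (φ : ℚ_[p] → ℂ) (hφ : IsSchwartzBruhat φ)
    (hφinv : ∀ (u x : ℚ_[p]), ‖u‖ = 1 → φ (u * x) = φ x) :
    ∀ x : ℚ_[p],
      fourierT p μ ψ (fun y => ballInd p n y *
          fourierInvT p μ ψ (fun z => ballInd p n z * φ z) y) x
        = ballInd p n x *
          fourierT p μ ψ (fun y => ballInd p n y * fourierInvT p μ ψ φ y) x := by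
  intro x
  exact final p μ hμ ψ hψ_cont hψ_add hψ_norm hψ_triv hψ_nontriv n φ hφ.1 hφ.2 x
end

section
/- (Theorem XI, ramified components with large conductor are killed by Q_n) Let n ≥ 0 and e ≥ 1 be integers with 2·n < e, and let χ be a multiplicative character of conductor e. If φ : ℚ_p → ℂ is a Schwartz–Bruhat function satisfying φ(u·x) = χ(u)·φ(x) for every x ∈ ℚ_p and every unit u (‖u‖ = 1), then Q_nφ = 0 pointwise. -/
open MeasureTheory Complex

open scoped ENNReal

/-- Multiplication by a norm-one element of `ℚ_[p]` preserves any additive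
Haar measure giving the closed unit ball measure `1`. -/
lemma measurePreserving_unit_mul {p : ℕ} [Fact p.Prime]
    [MeasurableSpace ℚ_[p]] [BorelSpace ℚ_[p]]
    (μ : Measure ℚ_[p]) [μ.IsAddHaarMeasure]
    (hμ : μ {x : ℚ_[p] | ‖x‖ ≤ 1} = 1)
    (u : ℚ_[p]) (hu : ‖u‖ = 1) :
    MeasurePreserving (fun y : ℚ_[p] => u * y) μ μ := by
  have hu0 : u ≠ 0 := by
    intro h; rw [h, norm_zero] at hu; exact zero_ne_one hu
  have hcont : Continuous (fun y : ℚ_[p] => u * y) := continuous_const.mul continuous_id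
  refine ⟨hcont.measurable, ?_⟩
  set ν := μ.map (fun y : ℚ_[p] => u * y) with hν
  have hνH : ν.IsAddHaarMeasure := by
    have h := AddEquiv.isAddHaarMeasure_map μ ((AddAut.mulLeft (Units.mk0 u hu0)) : ℚ_[p] ≃+ ℚ_[p])
      (continuous_const.mul continuous_id) (continuous_const.mul continuous_id)
    convert h using 2
    funext y
    rfl
  have huniq : ν = Measure.addHaarScalarFactor ν μ • μ :=
    Measure.isAddLeftInvariant_eq_smul ν μ
  have hBmeas : MeasurableSet {x : ℚ_[p] | ‖x‖ ≤ 1} :=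
    (isClosed_le continuous_norm continuous_const).measurableSet
  have hpre : (fun y : ℚ_[p] => u * y) ⁻¹' {x : ℚ_[p] | ‖x‖ ≤ 1} = {x : ℚ_[p] | ‖x‖ ≤ 1} := by
    ext y
    simp [Set.mem_preimage, norm_mul, hu]
  have hνB : ν {x : ℚ_[p] | ‖x‖ ≤ 1} = 1 := by
    rw [hν, Measure.map_apply hcont.measurable hBmeas, hpre, hμ]
  have hc : (Measure.addHaarScalarFactor ν μ : ℝ≥0∞) = 1 := by
    have := hνB
    rw [huniq] at this
    rw [Measure.smul_apply, hμ, ENNReal.smul_def, smul_eq_mul, mul_one] at this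
    exact this
  rw [huniq]
  ext s hs
  simp [Measure.smul_apply, hc]

/-- Theorem XI, ramified components with conductor `e > 2n` are killed by `Q_n`. -/
theorem Qop_kills_large_conductor (p : ℕ) [Fact p.Prime]
    [MeasurableSpace ℚ_[p]] [BorelSpace ℚ_[p]]
    (μ : Measure ℚ_[p]) [μ.IsAddHaarMeasure]
    (hμ : μ {x : ℚ_[p] | ‖x‖ ≤ 1} = 1)
    (ψ : ℚ_[p] → ℂ) (hψ_cont : Continuous ψ)
    (hψ_add : ∀ x y : ℚ_[p], ψ (x + y) = ψ x * ψ y)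
    (hψ_norm : ∀ x : ℚ_[p], ‖ψ x‖ = 1)
    (hψ_triv : ∀ x : ℚ_[p], ‖x‖ ≤ 1 → ψ x = 1)
    (hψ_nontriv : ∃ x₀ : ℚ_[p], ‖x₀‖ = (p : ℝ) ∧ ψ x₀ ≠ 1)
    (n : ℕ) (e : ℕ) (he : 1 ≤ e) (hne : 2 * n < e) (χ : ℚ_[p] → ℂ)
    (hχ_norm : ∀ u : ℚ_[p], ‖u‖ = 1 → ‖χ u‖ = 1)
    (hχ_mul : ∀ u v : ℚ_[p], ‖u‖ = 1 → ‖v‖ = 1 → χ (u * v) = χ u * χ v)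
    (hχ_cond : ∀ u : ℚ_[p], ‖u‖ = 1 → ‖u - 1‖ ≤ (p : ℝ) ^ (-(e : ℤ)) → χ u = 1)
    (hχ_min : ∃ u₀ : ℚ_[p], ‖u₀‖ = 1 ∧ ‖u₀ - 1‖ ≤ (p : ℝ) ^ (-((e : ℤ) - 1)) ∧ χ u₀ ≠ 1)
    (φ : ℚ_[p] → ℂ) (hφ : IsSchwartzBruhat φ)
    (hφeq : ∀ (u x : ℚ_[p]), ‖u‖ = 1 → φ (u * x) = χ u * φ x) :
    ∀ x : ℚ_[p], Qop p μ ψ n φ x = 0 := by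
  obtain ⟨u₀, hu₀n, hu₀e, hu₀χ⟩ := hχ_min
  have hp : p.Prime := Fact.out
  have hp1 : (1 : ℝ) < p := by exact_mod_cast hp.one_lt
  have hp0 : (p : ℝ) ≠ 0 := by positivity
  have hu0 : u₀ ≠ 0 := by
    intro h; rw [h, norm_zero] at hu₀n; exact zero_ne_one hu₀n
  have hmp := measurePreserving_unit_mul μ hμ u₀ hu₀n
  have hemb : MeasurableEmbedding (fun y : ℚ_[p] => u₀ * y) :=
    (Homeomorph.mulLeft₀ u₀ hu0).toMeasurableEquiv.measurableEmbedding
  have key : ∀ x : ℚ_[p], ‖x‖ ≤ (p : ℝ) ^ (n : ℤ) →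
      fourierInvT p μ ψ (fun y => ballInd p n y * φ y) x = 0 := by
    intro x hx
    set g := fourierInvT p μ ψ (fun y => ballInd p n y * φ y) with hg
    have hball : ∀ y : ℚ_[p], ballInd p n (u₀ * y) = ballInd p n y := by
      intro y
      simp [ballInd, Set.indicator_apply, Set.mem_setOf_eq, norm_mul, hu₀n]
    have hψeq : ∀ y : ℚ_[p], ‖y‖ ≤ (p : ℝ) ^ (n : ℤ) → ψ (u₀ * x * y) = ψ (x * y) := by
      intro y hy
      have h2 : ‖(u₀ - 1) * (x * y)‖ ≤ 1 := by
        rw [norm_mul, norm_mul]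
        calc ‖u₀ - 1‖ * (‖x‖ * ‖y‖)
            ≤ (p : ℝ) ^ (-((e : ℤ) - 1)) * ((p : ℝ) ^ (n : ℤ) * (p : ℝ) ^ (n : ℤ)) := by
              apply mul_le_mul hu₀e (mul_le_mul hx hy (norm_nonneg _) (by positivity))
                (by positivity) (by positivity)
          _ = (p : ℝ) ^ (-((e : ℤ) - 1) + ((n : ℤ) + (n : ℤ))) := by
              rw [← zpow_add₀ hp0, ← zpow_add₀ hp0]
          _ ≤ 1 := zpow_le_one_of_nonpos₀ hp1.le (by omega)
      have h1 : u₀ * x * y = x * y + (u₀ - 1) * (x * y) := by ring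
      rw [h1, hψ_add, hψ_triv _ h2, mul_one]
    have hA : g (u₀ * x) = g x := by
      rw [hg]
      unfold fourierInvT
      apply integral_congr_ae
      filter_upwards with y
      by_cases hy : ‖y‖ ≤ (p : ℝ) ^ (n : ℤ)
      · rw [hψeq y hy]
      · have h0 : ballInd p n y = 0 := by
          unfold ballInd
          rw [Set.indicator_of_notMem]
          exact hy
        rw [h0, zero_mul, zero_mul, zero_mul]
    have hpt : ∀ y : ℚ_[p],
        (ballInd p n (u₀ * y) * φ (u₀ * y)) * ψ (x * (u₀ * y))
          = χ u₀ * ((ballInd p n y * φ y) * ψ (u₀ * x * y)) := by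
      intro y
      rw [hball y, hφeq u₀ y hu₀n, show x * (u₀ * y) = u₀ * x * y by ring]
      ring
    have hcomp : (∫ y, (ballInd p n (u₀ * y) * φ (u₀ * y)) * ψ (x * (u₀ * y)) ∂μ)
        = ∫ z, (ballInd p n z * φ z) * ψ (x * z) ∂μ :=
      hmp.integral_comp hemb (fun z => (ballInd p n z * φ z) * ψ (x * z))
    have hB : χ u₀ * g (u₀ * x) = g x := by
      rw [hg]
      unfold fourierInvT
      rw [← hcomp, ← integral_const_mul]
      apply integral_congr_ae
      filter_upwards with y
      exact (hpt y).symm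
    have hgx : g x = χ u₀ * g x := by conv_lhs => rw [← hB, hA]
    have h1 : (1 - χ u₀) * g x = 0 := by linear_combination hgx
    rcases mul_eq_zero.1 h1 with h | h
    · exact absurd h (sub_ne_zero.mpr (Ne.symm hu₀χ))
    · exact h
  intro x
  unfold Qop fourierT
  have hz : ∀ y : ℚ_[p],
      ballInd p n y * fourierInvT p μ ψ (fun y => ballInd p n y * φ y) y = 0 := by
    intro y
    by_cases hy : ‖y‖ ≤ (p : ℝ) ^ (n : ℤ)
    · rw [key y hy, mul_zero]
    · have h0 : ballInd p n y = 0 := by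
        unfold ballInd
        rw [Set.indicator_of_notMem]
        exact hy
      rw [h0, zero_mul]
  simp only [hz, zero_mul, integral_zero]
end

section
/- (The Hardy-space Lemma: a unimodular multiplier preserving the Hardy space in both directions is constant) Let u : AddCircle (1 : ℝ) → ℂ be measurable with ‖u(θ)‖ = 1 for almost every θ (with respect to the normalized Haar measure). Assume that for every square-integrable f : AddCircle (1 : ℝ) → ℂ whose Fourier coefficients of all negative indices vanish (fourierCoeff f n = 0 for all integers n < 0), the pointwise products θ ↦ u(θ)·f(θ) and θ ↦ conj(u(θ))·f(θ) also have vanishing Fourier coefficients at every negative index. Then there exists a constant c ∈ ℂ with ‖c‖ = 1 such that u(θ) = c for almost every θ. -/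
open MeasureTheory Complex

namespace HardyAux

local notation "μ" => (AddCircle.haarAddCircle : Measure (AddCircle (1 : ℝ)))

lemma fourierCoeff_congr_ae {f g : AddCircle (1 : ℝ) → ℂ} (h : f =ᵐ[μ] g) (n : ℤ) :
    fourierCoeff f n = fourierCoeff g n := by
  unfold fourierCoeff
  exact integral_congr_ae (h.mono fun θ hθ => by simp only [hθ])

lemma fourierCoeff_const_one {n : ℤ} (hn : n ≠ 0) :
    fourierCoeff (fun _ : AddCircle (1 : ℝ) => (1 : ℂ)) n = 0 := by
  simp_rw [fourierCoeff, smul_eq_mul, mul_one]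
  exact integral_eq_zero_of_add_right_eq_neg
    (fourier_add_half_inv_index (neg_ne_zero.mpr hn) one_pos)

lemma fourierCoeff_const_one_zero :
    fourierCoeff (fun _ : AddCircle (1 : ℝ) => (1 : ℂ)) 0 = 1 := by
  simp [fourierCoeff, fourier_zero]

lemma fourierCoeff_conj (f : AddCircle (1 : ℝ) → ℂ) (n : ℤ) :
    fourierCoeff (fun θ => (starRingEnd ℂ) (f θ)) n = (starRingEnd ℂ) (fourierCoeff f (-n)) := by
  unfold fourierCoeff
  rw [← integral_conj]
  refine integral_congr_ae (Filter.Eventually.of_forall fun θ => ?_)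
  simp only [smul_eq_mul, map_mul, neg_neg]
  rw [← fourier_neg]

end HardyAux

open HardyAux

/-- The Hardy-space Lemma: a unimodular multiplier on the circle preserving the
Hardy space in both directions is a.e. a constant of modulus one. -/
theorem unimodular_hardy_multiplier_const
    (u : AddCircle (1 : ℝ) → ℂ) (hmeas : Measurable u)
    (hnorm : ∀ᵐ θ ∂(AddCircle.haarAddCircle : Measure (AddCircle (1 : ℝ))), ‖u θ‖ = 1)
    (hH : ∀ f : AddCircle (1 : ℝ) → ℂ,
      MemLp f 2 (AddCircle.haarAddCircle : Measure (AddCircle (1 : ℝ))) →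
      (∀ n : ℤ, n < 0 → fourierCoeff f n = 0) →
      (∀ n : ℤ, n < 0 → fourierCoeff (fun θ => u θ * f θ) n = 0) ∧
      (∀ n : ℤ, n < 0 → fourierCoeff (fun θ => (starRingEnd ℂ) (u θ) * f θ) n = 0)) :
    ∃ c : ℂ, ‖c‖ = 1 ∧
      ∀ᵐ θ ∂(AddCircle.haarAddCircle : Measure (AddCircle (1 : ℝ))), u θ = c := by
  set μ := (AddCircle.haarAddCircle : Measure (AddCircle (1 : ℝ)))
  -- u is in L²
  have hu2 : MemLp u 2 μ :=
    MemLp.of_bound hmeas.aestronglyMeasurable 1 (hnorm.mono fun θ h => h.le)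
  -- apply the hypothesis to the constant function 1
  obtain ⟨h1, h2⟩ := hH (fun _ => (1 : ℂ)) (memLp_const 1)
    (fun n hn => fourierCoeff_const_one hn.ne)
  simp only [mul_one] at h1 h2
  -- negative coefficients of u vanish
  have hneg : ∀ n : ℤ, n < 0 → fourierCoeff u n = 0 := h1
  -- positive coefficients of u vanish
  have hpos : ∀ n : ℤ, 0 < n → fourierCoeff u n = 0 := by
    intro n hn
    have := h2 (-n) (by omega)
    rw [fourierCoeff_conj, neg_neg] at this
    exact (starRingEnd ℂ).injective (by simpa using this)
  set c := fourierCoeff u 0 with hc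
  -- the function u - c has all Fourier coefficients zero
  set g : AddCircle (1 : ℝ) → ℂ := fun θ => u θ - c with hgdef
  have hg : MemLp g 2 μ := hu2.sub (memLp_const c)
  have hint : Integrable u μ := hu2.integrable one_le_two
  have hgcoeff : ∀ n : ℤ, fourierCoeff g n = 0 := by
    intro n
    have hfm : AEStronglyMeasurable (fun θ => (fourier (-n) θ : ℂ)) μ :=
      (map_continuous (fourier (-n) : C(AddCircle (1:ℝ), ℂ))).aestronglyMeasurable
    have hintn : Integrable (fun θ => (fourier (-n) θ : ℂ) * u θ) μ :=
      hint.bdd_mul (c := 1) hfm (Filter.Eventually.of_forall fun θ => by simp [Circle.norm_coe])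
    have hintc : Integrable (fun θ => (fourier (-n) θ : ℂ) * c) μ :=
      (integrable_const c).bdd_mul (c := 1) hfm (Filter.Eventually.of_forall fun θ => by simp [Circle.norm_coe])
    have : fourierCoeff g n = fourierCoeff u n - c * fourierCoeff (fun _ : AddCircle (1:ℝ) => (1:ℂ)) n := by
      unfold fourierCoeff
      simp_rw [hgdef, smul_eq_mul, mul_sub]
      rw [integral_sub hintn hintc]
      congr 1
      rw [← integral_const_mul]
      congr 1; ext θ; ring
    rcases lt_trichotomy n 0 with h | h | h
    · rw [this, hneg n h, fourierCoeff_const_one h.ne, mul_zero, sub_zero]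
    · subst h
      rw [this, fourierCoeff_const_one_zero, mul_one, ← hc, sub_self]
    · rw [this, hpos n h, fourierCoeff_const_one h.ne', mul_zero, sub_zero]
  -- conclude g = 0 a.e. via the Fourier Hilbert basis
  have hgae : g =ᵐ[μ] 0 := by
    set G := hg.toLp g with hG
    have hrepr : fourierBasis.repr G = 0 := by
      apply lp.ext
      funext n
      rw [fourierBasis_repr]
      rw [fourierCoeff_congr_ae hg.coeFn_toLp n]
      simp [hgcoeff n]
    have hG0 : G = 0 := by
      have := fourierBasis.repr.map_eq_zero_iff.mp hrepr
      exact this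
    calc g =ᵐ[μ] G := hg.coeFn_toLp.symm
      _ =ᵐ[μ] 0 := by rw [hG0]; exact Lp.coeFn_zero _ _ _
  have hconst : ∀ᵐ θ ∂μ, u θ = c := by
    filter_upwards [hgae] with θ hθ
    have h0 : u θ - c = 0 := by simpa using hθ
    exact sub_eq_zero.mp h0
  refine ⟨c, ?_, hconst⟩
  obtain ⟨θ, hθc, hθn⟩ := (hconst.and hnorm).exists
  rw [← hθc]; exact hθn
end

section
/- (Fourier transforms of ball indicator functions; in particular Tate's function ω = 1_{ℤ_p} is its own Fourier transform when δ = 0) For every integer n ∈ ℤ and every x ∈ ℚ_p, 𝓕(indicator of {y : ‖y‖ ≤ p^n})(x) = p^n · (indicator of {y : ‖y‖ ≤ p^(−n)})(x). In particular, 𝓕(1_{ℤ_p}) = 1_{ℤ_p} pointwise, where 1_{ℤ_p} is the indicator function of {y : ‖y‖ ≤ 1}. -/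
open MeasureTheory Complex Pointwise ENNReal

section Helpers

variable {p : ℕ} [hp : Fact p.Prime]

private lemma pR_pos : (0 : ℝ) < p := by exact_mod_cast hp.out.pos

private lemma pR_one_lt : (1 : ℝ) < p := by exact_mod_cast hp.out.one_lt

private lemma pQ_ne_zero : ((p : ℚ_[p])) ≠ 0 :=
  Nat.cast_ne_zero.mpr hp.out.ne_zero

private lemma padic_ball_measurable [MeasurableSpace ℚ_[p]] [BorelSpace ℚ_[p]] (r : ℝ) :
    MeasurableSet {y : ℚ_[p] | ‖y‖ ≤ r} :=
  (isClosed_le continuous_norm continuous_const).measurableSet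

/-- Ultrametric: if both `a` and `b` lie in a ball around `0`, so does `a + b`. -/
private lemma padic_ball_add {r : ℝ} {a b : ℚ_[p]} (ha : ‖a‖ ≤ r) (hb : ‖b‖ ≤ r) :
    ‖a + b‖ ≤ r :=
  (Padic.nonarchimedean a b).trans (max_le ha hb)

private lemma padic_ball_succ_eq (n : ℤ) :
    {y : ℚ_[p] | ‖y‖ ≤ (p : ℝ) ^ (n + 1)} =
      ⋃ k ∈ Finset.range p,
        ((k : ℚ_[p]) * (p : ℚ_[p]) ^ (-(n + 1)) +ᵥ {y : ℚ_[p] | ‖y‖ ≤ (p : ℝ) ^ n}) := by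
  have hcancel : (p : ℚ_[p]) ^ (n + 1) * (p : ℚ_[p]) ^ (-(n + 1)) = 1 := by
    rw [← zpow_add₀ (pQ_ne_zero (p := p)), show n + 1 + -(n + 1) = 0 from by ring, zpow_zero]
  have hnormc : ‖(p : ℚ_[p]) ^ (-(n + 1))‖ = (p : ℝ) ^ (n + 1) := by
    rw [Padic.norm_p_zpow, neg_neg]
  ext y
  simp only [Set.mem_setOf_eq, Set.mem_iUnion, Finset.mem_range,
    Set.mem_vadd_set_iff_neg_vadd_mem, vadd_eq_add]
  constructor
  · intro hy
    have hz1 : ‖y * (p : ℚ_[p]) ^ (n + 1)‖ ≤ 1 := by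
      rw [norm_mul, Padic.norm_p_zpow]
      calc ‖y‖ * (p : ℝ) ^ (-(n + 1)) ≤ (p : ℝ) ^ (n + 1) * (p : ℝ) ^ (-(n + 1)) := by
            apply mul_le_mul_of_nonneg_right hy (by positivity)
        _ = 1 := by
            rw [← zpow_add₀ (ne_of_gt (pR_pos (p := p))),
              show n + 1 + -(n + 1) = 0 from by ring, zpow_zero]
    set w : ℤ_[p] := ⟨y * (p : ℚ_[p]) ^ (n + 1), hz1⟩ with hw
    refine ⟨w.appr 1, by simpa using w.appr_lt 1, ?_⟩
    set k : ℕ := w.appr 1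
    have hspec : ‖(w - (k : ℤ_[p]) : ℤ_[p])‖ ≤ (p : ℝ) ^ (-(1 : ℕ) : ℤ) :=
      (PadicInt.norm_le_pow_iff_mem_span_pow _ 1).mpr (by simpa using w.appr_spec 1)
    have hspecQ : ‖y * (p : ℚ_[p]) ^ (n + 1) - (k : ℚ_[p])‖ ≤ (p : ℝ) ^ (-1 : ℤ) := by
      have : ((w - (k : ℤ_[p]) : ℤ_[p]) : ℚ_[p]) = y * (p : ℚ_[p]) ^ (n + 1) - (k : ℚ_[p]) := by
        rw [PadicInt.coe_sub, hw]; simp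
      rw [← this, PadicInt.padic_norm_e_of_padicInt]
      simpa using hspec
    have heq : -((k : ℚ_[p]) * (p : ℚ_[p]) ^ (-(n + 1))) + y
        = (y * (p : ℚ_[p]) ^ (n + 1) - (k : ℚ_[p])) * (p : ℚ_[p]) ^ (-(n + 1)) := by
      rw [sub_mul, mul_assoc, hcancel, mul_one]; ring
    rw [heq]
    show ‖_‖ ≤ _
    rw [norm_mul, hnormc]
    calc ‖y * (p : ℚ_[p]) ^ (n + 1) - (k : ℚ_[p])‖ * (p : ℝ) ^ (n + 1)
        ≤ (p : ℝ) ^ (-1 : ℤ) * (p : ℝ) ^ (n + 1) := by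
          apply mul_le_mul_of_nonneg_right hspecQ (by positivity)
      _ = (p : ℝ) ^ n := by
          rw [← zpow_add₀ (ne_of_gt (pR_pos (p := p)))]; norm_num
  · rintro ⟨k, hk, hky⟩
    have hck : ‖(k : ℚ_[p]) * (p : ℚ_[p]) ^ (-(n + 1))‖ ≤ (p : ℝ) ^ (n + 1) := by
      rw [norm_mul, hnormc]
      have : ‖(k : ℚ_[p])‖ ≤ 1 := by
        have := Padic.norm_int_le_one (p := p) (k : ℤ)
        simpa using this
      calc ‖(k : ℚ_[p])‖ * (p : ℝ) ^ (n + 1) ≤ 1 * (p : ℝ) ^ (n + 1) :=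
            mul_le_mul_of_nonneg_right this (by positivity)
        _ = (p : ℝ) ^ (n + 1) := one_mul _
    have hmono : (p : ℝ) ^ n ≤ (p : ℝ) ^ (n + 1) :=
      zpow_le_zpow_right₀ (le_of_lt (pR_one_lt (p := p))) (by omega)
    have : y = (k : ℚ_[p]) * (p : ℚ_[p]) ^ (-(n + 1))
        + (-((k : ℚ_[p]) * (p : ℚ_[p]) ^ (-(n + 1))) + y) := by ring
    rw [this]
    exact padic_ball_add hck (hky.trans hmono)

private lemma padic_ball_disjoint (n : ℤ) :
    (↑(Finset.range p) : Set ℕ).PairwiseDisjoint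
      (fun k : ℕ => ((k : ℚ_[p]) * (p : ℚ_[p]) ^ (-(n + 1))
        +ᵥ {y : ℚ_[p] | ‖y‖ ≤ (p : ℝ) ^ n})) := by
  intro k hk j hj hkj
  simp only [Finset.coe_range, Set.mem_Iio] at hk hj
  simp only [Function.onFun]
  rw [Set.disjoint_left]
  rintro y hyk hyj
  rw [Set.mem_vadd_set_iff_neg_vadd_mem] at hyk hyj
  simp only [vadd_eq_add, Set.mem_setOf_eq] at hyk hyj
  have hdiff : ‖((k : ℚ_[p]) - (j : ℚ_[p])) * (p : ℚ_[p]) ^ (-(n + 1))‖ ≤ (p : ℝ) ^ n := by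
    have heq : ((k : ℚ_[p]) - (j : ℚ_[p])) * (p : ℚ_[p]) ^ (-(n + 1))
        = (-((j : ℚ_[p]) * (p : ℚ_[p]) ^ (-(n + 1))) + y)
          - (-((k : ℚ_[p]) * (p : ℚ_[p]) ^ (-(n + 1))) + y) := by ring
    rw [heq, sub_eq_add_neg]
    exact padic_ball_add hyj (by rwa [norm_neg])
  have hone : ‖(k : ℚ_[p]) - (j : ℚ_[p])‖ = 1 := by
    have hcast : ((k : ℚ_[p]) - (j : ℚ_[p])) = (((k : ℤ) - (j : ℤ) : ℤ) : ℚ_[p]) := by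
      push_cast; ring
    rw [hcast]
    refine le_antisymm (Padic.norm_int_le_one _) ?_
    by_contra h
    push_neg at h
    have hdvd : (p : ℤ) ∣ (k : ℤ) - (j : ℤ) :=
      Padic.norm_intCast_lt_one_iff.mp h
    have : ((k : ℤ) - (j : ℤ)) = 0 :=
      Int.eq_zero_of_abs_lt_dvd hdvd (by rw [abs_sub_lt_iff]; omega)
    omega
  rw [norm_mul, hone, one_mul, Padic.norm_p_zpow, neg_neg] at hdiff
  have : (p : ℝ) ^ n < (p : ℝ) ^ (n + 1) :=
    zpow_lt_zpow_right₀ (pR_one_lt (p := p)) (by omega)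
  linarith

private lemma measure_padic_ball [MeasurableSpace ℚ_[p]] [BorelSpace ℚ_[p]]
    (μ : Measure ℚ_[p]) [μ.IsAddHaarMeasure]
    (hμ : μ {x : ℚ_[p] | ‖x‖ ≤ 1} = 1) (n : ℤ) :
    μ {y : ℚ_[p] | ‖y‖ ≤ (p : ℝ) ^ n} = (p : ℝ≥0∞) ^ n := by
  have hp0 : (p : ℝ≥0∞) ≠ 0 := by exact_mod_cast hp.out.ne_zero
  have hpt : (p : ℝ≥0∞) ≠ ⊤ := ENNReal.natCast_ne_top p
  have step : ∀ m : ℤ, μ {y : ℚ_[p] | ‖y‖ ≤ (p : ℝ) ^ (m + 1)}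
      = (p : ℝ≥0∞) * μ {y : ℚ_[p] | ‖y‖ ≤ (p : ℝ) ^ m} := by
    intro m
    rw [padic_ball_succ_eq m, measure_biUnion_finset (padic_ball_disjoint m)
      (fun k _ => (padic_ball_measurable _).const_vadd _)]
    simp only [measure_vadd]
    rw [Finset.sum_const, Finset.card_range, nsmul_eq_mul]
  induction n using Int.induction_on with
  | zero =>
    have h1 : ((p : ℝ) ^ (0 : ℤ)) = 1 := zpow_zero _
    rw [h1, hμ, zpow_zero]
  | succ k ih =>
    rw [step k, ih, ENNReal.zpow_add hp0 hpt, zpow_one]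
    ring
  | pred k ih =>
    have h := step (-(k : ℤ) - 1)
    have he : (-(k : ℤ) - 1) + 1 = -(k : ℤ) := by ring
    rw [he, ih] at h
    refine (ENNReal.mul_right_inj hp0 hpt).mp ?_
    rw [← h]
    have : (p : ℝ≥0∞) * (p : ℝ≥0∞) ^ (-(k : ℤ) - 1)
        = (p : ℝ≥0∞) ^ ((1 : ℤ) + (-(k : ℤ) - 1)) := by
      rw [ENNReal.zpow_add hp0 hpt, zpow_one]
    rw [this]
    congr 1
    ring

private lemma toReal_p_zpow (n : ℤ) : ((p : ℝ≥0∞) ^ n).toReal = (p : ℝ) ^ n := by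
  have hp0 : (p : ℝ≥0∞) ≠ 0 := by exact_mod_cast hp.out.ne_zero
  have hpt : (p : ℝ≥0∞) ≠ ⊤ := ENNReal.natCast_ne_top p
  have hppos := pR_pos (p := p)
  induction n using Int.induction_on with
  | zero => simp
  | succ k ih =>
    rw [ENNReal.zpow_add hp0 hpt, zpow_one, ENNReal.toReal_mul, ih,
      zpow_add₀ (ne_of_gt hppos), zpow_one]
    simp
  | pred k ih =>
    have h1 : (-(k : ℤ) - 1) + 1 = -(k : ℤ) := by ring
    have h2 := ENNReal.zpow_add hp0 hpt (-(k : ℤ) - 1) 1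
    rw [h1, zpow_one] at h2
    have h3 := zpow_add₀ (ne_of_gt hppos) (-(k : ℤ) - 1) 1
    rw [h1, zpow_one] at h3
    have h4 := ih
    rw [h2, ENNReal.toReal_mul] at h4
    have h5 : ((p : ℝ≥0∞)).toReal = (p : ℝ) := by simp
    rw [h5] at h4
    have h6 : ((p : ℝ≥0∞) ^ (-(k : ℤ) - 1)).toReal = (p : ℝ) ^ (-(k : ℤ)) / (p : ℝ) := by
      rw [eq_div_iff (ne_of_gt hppos)]
      exact h4
    rw [h6, h3]
    field_simp

end Helpers

/-- Fourier transforms of ball indicators (`δ = 0`):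
`𝓕(1_{B_n}) = p^n · 1_{B_{−n}}`; in particular Tate's function `ω = 1_{ℤ_p}`
is its own Fourier transform. -/
theorem fourier_ball_indicator (p : ℕ) [Fact p.Prime]
    [MeasurableSpace ℚ_[p]] [BorelSpace ℚ_[p]]
    (μ : Measure ℚ_[p]) [μ.IsAddHaarMeasure]
    (hμ : μ {x : ℚ_[p] | ‖x‖ ≤ 1} = 1)
    (ψ : ℚ_[p] → ℂ) (hψ_cont : Continuous ψ)
    (hψ_add : ∀ x y : ℚ_[p], ψ (x + y) = ψ x * ψ y)
    (hψ_norm : ∀ x : ℚ_[p], ‖ψ x‖ = 1)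
    (hψ_triv : ∀ x : ℚ_[p], ‖x‖ ≤ 1 → ψ x = 1)
    (hψ_nontriv : ∃ x₀ : ℚ_[p], ‖x₀‖ = (p : ℝ) ∧ ψ x₀ ≠ 1)
    : (∀ (n : ℤ) (x : ℚ_[p]),
        fourierT p μ ψ
            (Set.indicator {y : ℚ_[p] | ‖y‖ ≤ (p : ℝ) ^ n} (fun _ => (1 : ℂ))) x
          = (p : ℂ) ^ n *
            Set.indicator {y : ℚ_[p] | ‖y‖ ≤ (p : ℝ) ^ (-n)} (fun _ => (1 : ℂ)) x) ∧
      (∀ x : ℚ_[p],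
        fourierT p μ ψ
            (Set.indicator {y : ℚ_[p] | ‖y‖ ≤ 1} (fun _ => (1 : ℂ))) x
          = Set.indicator {y : ℚ_[p] | ‖y‖ ≤ 1} (fun _ => (1 : ℂ)) x) := by
  have hp : Fact p.Prime := inferInstance
  have hppos : (0 : ℝ) < p := by exact_mod_cast hp.out.pos
  have key : ∀ (n : ℤ) (x : ℚ_[p]),
      fourierT p μ ψ
          (Set.indicator {y : ℚ_[p] | ‖y‖ ≤ (p : ℝ) ^ n} (fun _ => (1 : ℂ))) x
        = (p : ℂ) ^ n *
          Set.indicator {y : ℚ_[p] | ‖y‖ ≤ (p : ℝ) ^ (-n)} (fun _ => (1 : ℂ)) x := by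
    intro n x
    set S : Set ℚ_[p] := {y : ℚ_[p] | ‖y‖ ≤ (p : ℝ) ^ n} with hS
    have hrw : (fun y => S.indicator (fun _ => (1 : ℂ)) y * ψ (-(x * y)))
        = S.indicator (fun y => ψ (-(x * y))) := by
      funext y
      by_cases h : y ∈ S <;> simp [h]
    show (∫ y, S.indicator (fun _ => (1 : ℂ)) y * ψ (-(x * y)) ∂μ) = _
    rw [show (fun y => S.indicator (fun _ => (1 : ℂ)) y * ψ (-(x * y))) =
      S.indicator (fun y => ψ (-(x * y))) from hrw] at *
    by_cases hx : ‖x‖ ≤ (p : ℝ) ^ (-n)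
    · -- trivial character on the ball
      have hind : S.indicator (fun y => ψ (-(x * y))) = S.indicator (fun _ => (1 : ℂ)) := by
        apply Set.indicator_congr
        intro y hy
        apply hψ_triv
        rw [norm_neg, norm_mul]
        calc ‖x‖ * ‖y‖ ≤ (p : ℝ) ^ (-n) * (p : ℝ) ^ n := by
              apply mul_le_mul hx hy (norm_nonneg _) (by positivity)
          _ = 1 := by rw [← zpow_add₀ (ne_of_gt hppos)]; simp
      rw [hrw, hind, integral_indicator_const _ (padic_ball_measurable _),
        measureReal_def, measure_padic_ball μ hμ n, Set.indicator_of_mem (by exact hx)]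
      rw [toReal_p_zpow, Complex.real_smul, mul_one]
      push_cast
      ring
    · -- nontrivial character: the integral vanishes
      obtain ⟨x₀, hx₀norm, hx₀ne⟩ := hψ_nontriv
      have hψ0 : ψ 0 = 1 := hψ_triv 0 (by simp)
      have hxne : x ≠ 0 := by
        intro h
        apply hx
        rw [h, norm_zero]
        positivity
      have hxlb : (p : ℝ) ^ (-n + 1) ≤ ‖x‖ := by
        by_contra h
        push_neg at h
        exact hx ((Padic.norm_le_pow_iff_norm_lt_pow_add_one x (-n)).mpr h)
      set t : ℚ_[p] := x₀ * x⁻¹ with ht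
      have hxt : x * t = x₀ := by
        rw [ht, mul_comm x₀ x⁻¹, ← mul_assoc, mul_inv_cancel₀ hxne, one_mul]
      have htS : t ∈ S := by
        rw [hS, Set.mem_setOf_eq, ht, norm_mul, norm_inv, hx₀norm]
        have hxpos : (0 : ℝ) < ‖x‖ := norm_pos_iff.mpr hxne
        have hinv : ‖x‖⁻¹ ≤ (p : ℝ) ^ (n - 1) := by
          have h1 : ((p : ℝ) ^ (-n + 1))⁻¹ = (p : ℝ) ^ (n - 1) := by
            rw [← zpow_neg]; congr 1; ring
          rw [← h1]
          exact inv_anti₀ (by positivity) hxlb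
        calc (p : ℝ) * ‖x‖⁻¹ ≤ (p : ℝ) * (p : ℝ) ^ (n - 1) :=
              mul_le_mul_of_nonneg_left hinv (le_of_lt hppos)
          _ = (p : ℝ) ^ n := by
              have h := zpow_add₀ (ne_of_gt hppos) (1 : ℤ) (n - 1)
              rw [zpow_one] at h
              rw [← h]
              congr 1
              ring
      have hcne : ψ (-(x * t)) ≠ 1 := by
        rw [hxt]
        intro h
        apply hx₀ne
        have := hψ_add x₀ (-x₀)
        rw [add_neg_cancel, hψ0, h, mul_one] at this
        exact this.symm
      set g : ℚ_[p] → ℂ := S.indicator (fun y => ψ (-(x * y))) with hg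
      have hSshift : ∀ y : ℚ_[p], y + t ∈ S ↔ y ∈ S := by
        intro y
        constructor
        · intro h
          have : y = (y + t) + (-t) := by ring
          rw [this]
          exact padic_ball_add h (by rwa [norm_neg])
        · intro h
          exact padic_ball_add h htS
      have hgshift : ∀ y : ℚ_[p], g (y + t) = ψ (-(x * t)) * g y := by
        intro y
        by_cases hy : y ∈ S
        · have hy' : y + t ∈ S := (hSshift y).mpr hy
          rw [hg]
          simp only [Set.indicator_of_mem hy', Set.indicator_of_mem hy]
          have : -(x * (y + t)) = -(x * t) + -(x * y) := by ring
          rw [this, hψ_add]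
        · have hy' : y + t ∉ S := fun h => hy ((hSshift y).mp h)
          rw [hg]
          simp only [Set.indicator_of_notMem hy', Set.indicator_of_notMem hy, mul_zero]
      have hinv : ∫ y, g (y + t) ∂μ = ∫ y, g y ∂μ := integral_add_right_eq_self g t
      have hmul : ∫ y, g y ∂μ = ψ (-(x * t)) * ∫ y, g y ∂μ := by
        conv_lhs => rw [← hinv]
        simp_rw [hgshift]
        rw [integral_const_mul]
      have hzero : ∫ y, g y ∂μ = 0 := by
        have h0 : (1 - ψ (-(x * t))) * ∫ y, g y ∂μ = 0 := by
          rw [sub_mul, one_mul, ← hmul, sub_self]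
        rcases mul_eq_zero.mp h0 with h | h
        · exact absurd (by linear_combination -h : ψ (-(x * t)) = 1) hcne
        · exact h
      have hx' : x ∉ {y : ℚ_[p] | ‖y‖ ≤ (p : ℝ) ^ (-n)} := hx
      rw [Set.indicator_of_notMem hx', mul_zero]
      exact hzero
  refine ⟨key, fun x => ?_⟩
  have h := key 0 x
  have h1 : ((p : ℝ) ^ (0 : ℤ)) = 1 := zpow_zero _
  have h2 : ((p : ℝ) ^ (-(0 : ℤ))) = 1 := by norm_num
  rw [h1, h2, zpow_zero, one_mul] at h
  exact h
end

section
/- (Completeness axiom for the incoming subspace: the dilates of D₋ span L²) The set of Schwartz–Bruhat functions φ : ℚ_p → ℂ (locally constant with compact support) satisfying ∫ φ dμ = 0 is dense in the space L²(ℚ_p, μ) of square-integrable functions: every square-integrable function is the L²-limit of a sequence of compactly supported locally constant functions with vanishing integral. -/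
open MeasureTheory Complex
open scoped ENNReal

section Aux

open Set Metric Filter ENNReal

/-- The indicator of a clopen set with a constant value is locally constant. -/
lemma isLocallyConstant_indicator_clopen {X : Type*} [TopologicalSpace X] {V : Set X}
    (hV : IsClopen V) (c : ℂ) : IsLocallyConstant (V.indicator fun _ => c) := by
  classical
  intro s
  have h : (V.indicator fun _ => c) ⁻¹' s =
      (if c ∈ s then V else ∅) ∪ (if (0:ℂ) ∈ s then Vᶜ else ∅) := by
    ext x
    by_cases hx : x ∈ V <;> by_cases hc : c ∈ s <;> by_cases h0 : (0:ℂ) ∈ s <;>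
      simp [Set.indicator_apply, hx, hc, h0]
  rw [h]
  apply IsOpen.union <;> split_ifs <;>
    first
      | exact hV.isOpen
      | exact hV.isClosed.isOpen_compl
      | exact isOpen_empty

lemma exists_delta_aux (k η : ℝ≥0∞) (hk : k ≠ ∞) (hη : η ≠ 0) :
    ∃ δ : ℝ≥0∞, δ ≠ 0 ∧ k * δ ^ ((1:ℝ)/2) ≤ η := by
  by_cases hk0 : k = 0
  · exact ⟨1, one_ne_zero, by simp [hk0]⟩
  by_cases hηt : η = ∞
  · exact ⟨1, one_ne_zero, by simp [hηt]⟩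
  refine ⟨(η / k) ^ (2:ℝ), ?_, ?_⟩
  · have : η / k ≠ 0 := ENNReal.div_ne_zero.2 ⟨hη, hk⟩
    simp [ENNReal.rpow_eq_zero_iff_of_pos (by norm_num : (0:ℝ) < 2), this]
  · have h1 : ((η / k) ^ (2:ℝ)) ^ ((1:ℝ)/2) = η / k := by
      rw [← ENNReal.rpow_mul]
      norm_num
    rw [h1, ENNReal.mul_div_cancel hk0 hk]

variable {p : ℕ} [Fact p.Prime] [MeasurableSpace ℚ_[p]] [BorelSpace ℚ_[p]]
  (μ : Measure ℚ_[p]) [μ.IsAddHaarMeasure]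

lemma sb_memℒp {g : ℚ_[p] → ℂ} (hg : IsSchwartzBruhat g) : MemLp g 2 μ :=
  hg.1.continuous.memLp_of_hasCompactSupport hg.2

/-- Approximation of indicators of finite-measure sets by Schwartz–Bruhat functions in `L²`. -/
lemma indicator_approx (c : ℂ) {s : Set ℚ_[p]} (hs : MeasurableSet s) (hsμ : μ s < ∞)
    {ε : ℝ≥0∞} (hε : ε ≠ 0) :
    ∃ g : ℚ_[p] → ℂ, eLpNorm (g - s.indicator fun _ => c) 2 μ ≤ ε ∧ IsSchwartzBruhat g := by
  have hhalf : ε / 2 ≠ 0 := by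
    simp [ENNReal.div_eq_zero_iff, hε]
  obtain ⟨δ, hδ0, hδ⟩ := exists_delta_aux (‖c‖₊ : ℝ≥0∞) (ε / 2) ENNReal.coe_ne_top hhalf
  obtain ⟨U, hsU, hUopen, hUfin, hUd⟩ := hs.exists_isOpen_diff_lt hsμ.ne hδ0
  obtain ⟨K, hKs, hKcomp, hKd⟩ := hs.exists_isCompact_diff_lt hsμ.ne hδ0
  -- cover K by small clopen balls inside U
  have hball : ∀ x : ℚ_[p], ∃ r : ℝ, 0 < r ∧ r ≤ 1 ∧ (x ∈ K → Metric.ball x r ⊆ U) := by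
    intro x
    by_cases hx : x ∈ K
    · obtain ⟨r, hr, hrU⟩ := Metric.isOpen_iff.1 hUopen x (hsU (hKs hx))
      exact ⟨min r 1, lt_min hr one_pos, min_le_right _ _,
        fun _ => (Metric.ball_subset_ball (min_le_left _ _)).trans hrU⟩
    · exact ⟨1, one_pos, le_refl _, fun h => absurd h hx⟩
  choose r hr0 hr1 hrU using hball
  obtain ⟨t, htK, htcov⟩ := hKcomp.elim_nhds_subcover (fun x => Metric.ball x (r x))
    (fun x _ => Metric.ball_mem_nhds x (hr0 x))
  set V : Set ℚ_[p] := ⋃ x ∈ t, Metric.ball x (r x) with hV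
  have hVclopen : IsClopen V := by
    exact isClopen_biUnion_finset fun x _ => IsUltrametricDist.isClopen_ball x (r x)
  have hVU : V ⊆ U := Set.iUnion₂_subset fun x hx => hrU x (htK x hx)
  have hVbdd : Bornology.IsBounded V := by
    exact (Bornology.isBounded_biUnion t.finite_toSet).2 fun x _ => Metric.isBounded_ball
  have hVcomp : IsCompact V := isCompact_of_isClosed_isBounded hVclopen.isClosed hVbdd
  have hKV : K ⊆ V := htcov
  have hVmeas : MeasurableSet V := hVclopen.isOpen.measurableSet
  refine ⟨V.indicator fun _ => c, ?_, ?_, ?_⟩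
  · -- the L² estimate
    have hdiff : (V.indicator fun _ => c) - (s.indicator fun _ => c) =
        ((V \ s).indicator fun _ => c) - ((s \ V).indicator fun _ => c) := by
      funext x
      by_cases hxV : x ∈ V <;> by_cases hxs : x ∈ s <;>
        simp [Set.indicator_apply, hxV, hxs, Set.mem_diff]
    have m1 : AEStronglyMeasurable ((V \ s).indicator fun _ => c) μ :=
      (stronglyMeasurable_const.indicator (hVmeas.diff hs)).aestronglyMeasurable
    have m2 : AEStronglyMeasurable ((s \ V).indicator fun _ => c) μ :=
      (stronglyMeasurable_const.indicator (hs.diff hVmeas)).aestronglyMeasurable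
    have hVsle : μ (V \ s) ≤ δ := le_of_lt (lt_of_le_of_lt (measure_mono
      (Set.diff_subset_diff_left hVU)) hUd)
    have hsVle : μ (s \ V) ≤ δ := le_of_lt (lt_of_le_of_lt (measure_mono
      (Set.diff_subset_diff_right hKV)) hKd)
    have hexp : 1 / (2:ℝ≥0∞).toReal = (1:ℝ)/2 := by norm_num
    have key : ∀ A : Set ℚ_[p], MeasurableSet A → μ A ≤ δ →
        eLpNorm (A.indicator fun _ => c) 2 μ ≤ ε / 2 := by
      intro A hA hAle
      rw [eLpNorm_indicator_const hA two_ne_zero ENNReal.ofNat_ne_top, hexp]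
      refine le_trans ?_ hδ
      exact mul_le_mul_right (ENNReal.rpow_le_rpow hAle (by norm_num)) _
    calc eLpNorm ((V.indicator fun _ => c) - s.indicator fun _ => c) 2 μ
        = eLpNorm (((V \ s).indicator fun _ => c) - ((s \ V).indicator fun _ => c)) 2 μ := by
          rw [hdiff]
      _ ≤ eLpNorm ((V \ s).indicator fun _ => c) 2 μ
          + eLpNorm ((s \ V).indicator fun _ => c) 2 μ :=
          eLpNorm_sub_le m1 m2 one_le_two
      _ ≤ ε / 2 + ε / 2 := add_le_add (key _ (hVmeas.diff hs) hVsle) (key _ (hs.diff hVmeas) hsVle)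
      _ = ε := ENNReal.add_halves ε
  · exact isLocallyConstant_indicator_clopen hVclopen c
  · exact HasCompactSupport.intro hVcomp fun x hx => Set.indicator_of_notMem hx _

/-- Schwartz–Bruhat functions are dense in `L²`. -/
lemma approx_SB {f : ℚ_[p] → ℂ} (hf : MemLp f 2 μ) {ε : ℝ≥0∞} (hε : ε ≠ 0) :
    ∃ g : ℚ_[p] → ℂ, eLpNorm (f - g) 2 μ ≤ ε ∧ IsSchwartzBruhat g := by
  refine hf.induction_dense ENNReal.ofNat_ne_top IsSchwartzBruhat ?_ ?_ ?_ hε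
  · intro c s hs hsfin ε' hε'
    obtain ⟨g, h1, h2⟩ := indicator_approx μ c hs hsfin hε'
    exact ⟨g, h1, h2⟩
  · intro f g hf hg
    exact ⟨hf.1.add hg.1, hf.2.add hg.2⟩
  · intro f hf
    exact hf.1.continuous.aestronglyMeasurable

/-- Fix up the mean of a Schwartz–Bruhat function at small `L²` cost. -/
lemma meanzero_fix {g : ℚ_[p] → ℂ} (hg : IsSchwartzBruhat g) {ε : ℝ≥0∞} (hε : ε ≠ 0) :
    ∃ g' : ℚ_[p] → ℂ, (IsSchwartzBruhat g' ∧ ∫ x, g' x ∂μ = 0) ∧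
      eLpNorm (fun x => g x - g' x) 2 μ ≤ ε := by
  classical
  set c : ℂ := ∫ x, g x ∂μ with hc
  -- an exhausting sequence of balls
  set B : ℕ → Set ℚ_[p] := fun m => Metric.closedBall (0:ℚ_[p]) ((p:ℝ)^m) with hB
  have hp1 : (1:ℝ) < (p:ℝ) := by
    exact_mod_cast (Fact.out : p.Prime).one_lt
  have hmono : Monotone B := fun a b hab =>
    Metric.closedBall_subset_closedBall (pow_le_pow_right₀ hp1.le hab)
  have hunion : ⋃ m, B m = Set.univ := by
    apply Set.eq_univ_iff_forall.2
    intro x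
    obtain ⟨n, hn⟩ := pow_unbounded_of_one_lt ‖x‖ hp1
    exact Set.mem_iUnion.2 ⟨n, by simpa [hB, Metric.mem_closedBall, dist_zero_right] using hn.le⟩
  have htend : Filter.Tendsto (fun m => μ (B m)) Filter.atTop (nhds ∞) := by
    have h := tendsto_measure_iUnion_atTop (μ := μ) hmono
    rwa [hunion, measure_univ_of_isAddLeftInvariant] at h
  -- choose a ball of large measure
  set N : ℝ≥0∞ := max 1 (if ε = ∞ then 0 else ((‖c‖₊ : ℝ≥0∞) / ε) ^ (2:ℝ)) with hN
  have hNlt : N < ∞ := by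
    rw [hN, max_lt_iff]
    refine ⟨ENNReal.one_lt_top, ?_⟩
    split_ifs with h
    · exact ENNReal.zero_lt_top
    · exact ENNReal.rpow_lt_top_of_nonneg (by norm_num)
        (ENNReal.div_lt_top ENNReal.coe_ne_top hε).ne
  obtain ⟨m, hm⟩ := (htend.eventually (Ioi_mem_nhds hNlt)).exists
  set t : ℝ≥0∞ := μ (B m) with ht
  have htfin : t ≠ ∞ := (isCompact_closedBall _ _).measure_lt_top.ne
  have ht1 : 1 < t := lt_of_le_of_lt (le_max_left _ _) hm
  have ht0 : t ≠ 0 := fun h => by simp [h] at ht1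
  have hmeas : MeasurableSet (B m) := Metric.isClosed_closedBall.measurableSet
  have hclopen : IsClopen (B m) := by
    apply IsUltrametricDist.isClopen_closedBall
    exact (pow_pos (lt_trans one_pos hp1) m).ne'
  set tr : ℝ := t.toReal with htr
  have htrpos : 0 < tr := ENNReal.toReal_pos ht0 htfin
  set a : ℂ := c / (tr : ℂ) with ha
  refine ⟨fun x => g x - (B m).indicator (fun _ => a) x, ⟨⟨?_, ?_⟩, ?_⟩, ?_⟩
  · exact hg.1.sub (isLocallyConstant_indicator_clopen hclopen a)
  · exact hg.2.comp₂_left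
      (HasCompactSupport.intro (isCompact_closedBall _ _)
        fun x hx => Set.indicator_of_notMem hx _) (sub_zero 0)
  · -- vanishing integral
    have hgint : Integrable g μ := hg.1.continuous.integrable_of_hasCompactSupport hg.2
    have hindint : Integrable ((B m).indicator fun _ => a) μ := by
      rw [integrable_indicator_iff hmeas]
      exact integrableOn_const htfin
    rw [integral_sub hgint hindint, integral_indicator_const a hmeas, ← hc, measureReal_def, ← ht]
    have : tr • a = c := by
      rw [ha, Complex.real_smul, mul_div_cancel₀]
      exact_mod_cast htrpos.ne'
    rw [← htr, this, sub_self]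
  · -- the L² estimate
    have hfun : (fun x => g x - (g x - (B m).indicator (fun _ => a) x)) =
        (B m).indicator fun _ => a := by
      funext x; ring
    rw [hfun, eLpNorm_indicator_const hmeas two_ne_zero ENNReal.ofNat_ne_top, ← ht]
    have hexp : 1 / (2:ℝ≥0∞).toReal = (1:ℝ)/2 := by norm_num
    rw [hexp]
    -- ‖a‖₊ = ‖c‖₊ / t
    have hanorm : (‖a‖₊ : ℝ≥0∞) = (‖c‖₊ : ℝ≥0∞) / t := by
      rw [ha, nnnorm_div, ENNReal.coe_div (by
        simpa using htrpos.ne' : ‖(tr:ℂ)‖₊ ≠ 0)]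
      congr 1
      rw [Complex.nnnorm_real, ← enorm_eq_nnnorm, Real.enorm_eq_ofReal htrpos.le, htr,
        ENNReal.ofReal_toReal htfin]
    rw [enorm_eq_nnnorm, hanorm]
    by_cases hεtop : ε = ∞
    · simp [hεtop]
    -- now ε is finite and nonzero
    have htN : ((‖c‖₊ : ℝ≥0∞) / ε) ^ (2:ℝ) ≤ t := by
      refine le_of_lt (lt_of_le_of_lt ?_ hm)
      rw [hN]
      simp only [hεtop, if_false]
      exact le_max_right _ _
    set s : ℝ≥0∞ := t ^ ((1:ℝ)/2) with hs
    have hs2 : s * s = t := by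
      rw [hs, ← ENNReal.rpow_add _ _ ht0 htfin]
      norm_num
    have hsX : (‖c‖₊ : ℝ≥0∞) / ε ≤ s := by
      have := ENNReal.rpow_le_rpow htN (by norm_num : (0:ℝ) ≤ 1/2)
      rwa [← ENNReal.rpow_mul, show (2:ℝ) * (1/2) = 1 by norm_num, ENNReal.rpow_one] at this
    have hA : (‖c‖₊ : ℝ≥0∞) ≤ ε * s := by
      calc (‖c‖₊ : ℝ≥0∞) = ε * ((‖c‖₊ : ℝ≥0∞) / ε) := (ENNReal.mul_div_cancel hε hεtop).symm
        _ ≤ ε * s := mul_le_mul_right hsX _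
    have hrw : (‖c‖₊ : ℝ≥0∞) / t * s = (‖c‖₊ : ℝ≥0∞) * s / t := by
      rw [div_eq_mul_inv, mul_right_comm, ← div_eq_mul_inv]
    rw [hrw, ENNReal.div_le_iff ht0 htfin]
    calc (‖c‖₊ : ℝ≥0∞) * s ≤ ε * s * s := mul_le_mul_left hA s
      _ = ε * t := by rw [mul_assoc, hs2]

end Aux

/-- Completeness axiom for the incoming subspace: Schwartz–Bruhat functions
with vanishing integral are dense in `L²(ℚ_p, μ)` — every square-integrable
function is an `L²`-limit of compactly supported locally constant functions
with vanishing integral. -/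
theorem schwartzBruhat_meanZero_dense_L2 (p : ℕ) [Fact p.Prime]
    [MeasurableSpace ℚ_[p]] [BorelSpace ℚ_[p]]
    (μ : Measure ℚ_[p]) [μ.IsAddHaarMeasure]
    (hμ : μ {x : ℚ_[p] | ‖x‖ ≤ 1} = 1)
    (f : ℚ_[p] → ℂ) (hf : MemLp f 2 μ) :
    ∃ g : ℕ → (ℚ_[p] → ℂ),
      (∀ k : ℕ, IsSchwartzBruhat (g k) ∧ ∫ x, g k x ∂μ = 0) ∧
      Filter.Tendsto (fun k => eLpNorm (fun x => f x - g k x) 2 μ)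
        Filter.atTop (nhds 0) := by
  have H : ∀ k : ℕ, ∃ g' : ℚ_[p] → ℂ, (IsSchwartzBruhat g' ∧ ∫ x, g' x ∂μ = 0) ∧
      eLpNorm (fun x => f x - g' x) 2 μ ≤ ((k:ℝ≥0∞)+1)⁻¹ := by
    intro k
    set ε : ℝ≥0∞ := ((k:ℝ≥0∞)+1)⁻¹ with hε
    have hε0 : ε ≠ 0 := by
      rw [hε]
      exact ENNReal.inv_ne_zero.2 (by simp)
    have hhalf : ε / 2 ≠ 0 := by simp [ENNReal.div_eq_zero_iff, hε0]
    obtain ⟨g1, hg1n, hg1SB⟩ := approx_SB μ hf hhalf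
    obtain ⟨g', hg'P, hg'n⟩ := meanzero_fix μ hg1SB hhalf
    refine ⟨g', hg'P, ?_⟩
    have hsplit : (fun x => f x - g' x) =
        (f - g1) + fun x => g1 x - g' x := by
      funext x; simp only [Pi.add_apply, Pi.sub_apply]; ring
    rw [hsplit]
    calc eLpNorm ((f - g1) + fun x => g1 x - g' x) 2 μ
        ≤ eLpNorm (f - g1) 2 μ + eLpNorm (fun x => g1 x - g' x) 2 μ :=
          eLpNorm_add_le (hf.aestronglyMeasurable.sub
              hg1SB.1.continuous.aestronglyMeasurable)
            (hg1SB.1.continuous.aestronglyMeasurable.sub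
              hg'P.1.1.continuous.aestronglyMeasurable) one_le_two
      _ ≤ ε / 2 + ε / 2 := add_le_add hg1n hg'n
      _ = ε := ENNReal.add_halves ε
  choose g hg hbound using H
  refine ⟨g, hg, ?_⟩
  have h0 : Filter.Tendsto (fun k : ℕ => ((k:ℝ≥0∞)+1)⁻¹) Filter.atTop (nhds 0) := by
    have h := ENNReal.tendsto_inv_nat_nhds_zero.comp (Filter.tendsto_add_atTop_nat 1)
    have heq : ((fun n : ℕ => ((n:ℝ≥0∞))⁻¹) ∘ fun a => a + 1) =
        fun k : ℕ => ((k:ℝ≥0∞)+1)⁻¹ := by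
      funext k
      simp [Function.comp, Nat.cast_add, Nat.cast_one]
    rwa [heq] at h
  exact tendsto_of_tendsto_of_tendsto_of_le_of_le tendsto_const_nhds h0
    (fun k => zero_le) hbound
end
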